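/- arXiv:2006.10641 — 10 statements merged into one kernel-verified Lean document; each statement's English description precedes it below -/
import Mathlib

section
/- Let G be a finite simple graph with vertex set 𝒳 and adjacency relation A. Define 𝒰(i,j) = 0 if i = j or i is adjacent to j in G, and 𝒰(i,j) = −1 otherwise. Then for every n, the sender graph G_sⁿ induced by 𝒰 (distinct x,y adjacent iff ∑ₖ𝒰(xₖ,yₖ) ≥ 0 or ∑ₖ𝒰(yₖ,xₖ) ≥ 0) equals the n-fold strong product G^{⊠n}. Consequently Ξ(𝒰) = Θ(G), the Shannon capacity of G. -/
open Finset Filter Real Topology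

/-- Sender graph induced by utility `U` on `n`-length sequences: distinct `x, y`
are adjacent iff the total (equivalently, average) utility is nonnegative in one direction. -/
def senderGraph {X : Type*} (U : X → X → ℝ) (n : ℕ) : SimpleGraph (Fin n → X) where
  Adj x y := x ≠ y ∧ (0 ≤ ∑ k, U (y k) (x k) ∨ 0 ≤ ∑ k, U (x k) (y k))
  symm := ⟨fun x y h => ⟨h.1.symm, h.2.symm⟩⟩
  loopless := ⟨fun x h => h.1 rfl⟩

/-- Base sender graph on the alphabet itself. -/
def baseGraph {X : Type*} (U : X → X → ℝ) : SimpleGraph X where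
  Adj i j := i ≠ j ∧ (0 ≤ U i j ∨ 0 ≤ U j i)
  symm := ⟨fun i j h => ⟨h.1.symm, h.2.symm⟩⟩
  loopless := ⟨fun i h => h.1 rfl⟩

/-- `n`-fold strong product (strong power) of a graph. -/
def strongPow {V : Type*} (G : SimpleGraph V) (n : ℕ) : SimpleGraph (Fin n → V) where
  Adj x y := x ≠ y ∧ ∀ k, x k = y k ∨ G.Adj (x k) (y k)
  symm := ⟨fun x y h => ⟨h.1.symm, fun k => (h.2 k).imp Eq.symm SimpleGraph.Adj.symm⟩⟩
  loopless := ⟨fun x h => h.1 rfl⟩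

/-- Independence number of a graph: the largest size of a set of pairwise
non-adjacent vertices. -/
noncomputable def indepNum {V : Type*} (G : SimpleGraph V) : ℕ :=
  sSup {m | ∃ s : Finset V, s.card = m ∧ ∀ x ∈ s, ∀ y ∈ s, ¬ G.Adj x y}

/-- The sequence `n ↦ α(G_s^n)^{1/n}` whose limit is the information
extraction capacity `Ξ(U)`. -/
noncomputable def capSeq {X : Type*} (U : X → X → ℝ) (n : ℕ) : ℝ :=
  (indepNum (senderGraph U n) : ℝ) ^ (1 / (n : ℝ))

/-- For the utility which is `0` on the diagonal and on edges of `G`, and `-1`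
otherwise, the sender graph `G_s^n` equals the strong power `G^{⊠n}`; hence the
information extraction capacity `Ξ(U)` equals the Shannon capacity `Θ(G)`. -/
theorem senderGraph_eq_strongPow_of_graph_utility {X : Type*} [Fintype X]
    (G : SimpleGraph X) (U : X → X → ℝ)
    (hU0 : ∀ i j, (i = j ∨ G.Adj i j) → U i j = 0)
    (hU1 : ∀ i j, ¬(i = j ∨ G.Adj i j) → U i j = -1) :
    (∀ n, senderGraph U n = strongPow G n) ∧
    ∀ L : ℝ,
      Filter.Tendsto (capSeq U) Filter.atTop (nhds L) ↔
      Filter.Tendsto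
        (fun n : ℕ => (indepNum (strongPow G n) : ℝ) ^ (1 / (n : ℝ)))
        Filter.atTop (nhds L) := by

  have hle : ∀ i j : X, U i j ≤ 0 := by
    intro i j
    by_cases h : i = j ∨ G.Adj i j
    · rw [hU0 i j h]
    · rw [hU1 i j h]; norm_num
  have hzero : ∀ i j : X, U i j = 0 ↔ (i = j ∨ G.Adj i j) := by
    intro i j
    constructor
    · intro h
      by_contra hc
      rw [hU1 i j hc] at h
      norm_num at h
    · exact hU0 i j
  have hsum : ∀ n (x y : Fin n → X),
      (0 ≤ ∑ k, U (x k) (y k)) ↔ ∀ k, x k = y k ∨ G.Adj (x k) (y k) := by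
    intro n x y
    have h1 : (0 ≤ ∑ k, U (x k) (y k)) ↔ ∑ k, U (x k) (y k) = 0 := by
      constructor
      · intro h
        exact le_antisymm (Finset.sum_nonpos fun k _ => hle _ _) h
      · intro h; rw [h]
    rw [h1, Finset.sum_eq_zero_iff_of_nonpos (fun k _ => hle _ _)]
    simp only [Finset.mem_univ, true_implies]
    constructor
    · intro h k; exact (hzero _ _).1 (h k)
    · intro h k; exact (hzero _ _).2 (h k)
  have heq : ∀ n, senderGraph U n = strongPow G n := by
    intro n
    ext x y
    show (x ≠ y ∧ (0 ≤ ∑ k, U (y k) (x k) ∨ 0 ≤ ∑ k, U (x k) (y k))) ↔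
      (x ≠ y ∧ ∀ k, x k = y k ∨ G.Adj (x k) (y k))
    constructor
    · rintro ⟨hne, h | h⟩
      · refine ⟨hne, fun k => ?_⟩
        rcases (hsum n y x).1 h k with h' | h'
        · exact Or.inl h'.symm
        · exact Or.inr h'.symm
      · exact ⟨hne, (hsum n x y).1 h⟩
    · rintro ⟨hne, h⟩
      exact ⟨hne, Or.inr ((hsum n x y).2 h)⟩
  refine ⟨heq, fun L => ?_⟩
  have : capSeq U = fun n : ℕ => (indepNum (strongPow G n) : ℝ) ^ (1 / (n : ℝ)) := by
    funext n
    unfold capSeq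
    rw [heq n]
  rw [this]
end

section
/- Let 𝒳 be a finite alphabet, 𝒰 a utility with zero diagonal, and 𝒴 ⊆ 𝒳 a subset such that for every non-identity |𝒴| × |𝒴| permutation matrix Q (indexed by 𝒴), ∑_{i,j∈𝒴} Q(i,j)𝒰(i,j) < 0. Then for every K ∈ ℕ, the uniform type class T_𝒴^K (sequences of length K|𝒴| in which each symbol of 𝒴 appears exactly K times) is an independent set in the sender graph G_s^{K|𝒴|}. -/
open Finset Filter Real Topology

/-- Key lemma: for distinct sequences in the uniform type class, the total utility
`∑ k, U (y k) (x k)` is strictly negative. -/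
lemma sum_util_neg_of_ne {X : Type*} [Fintype X] [DecidableEq X]
    (U : X → X → ℝ) (hdiag : ∀ i, U i i = 0) (Y : Finset X)
    (hY : ∀ σ : Equiv.Perm {i // i ∈ Y}, σ ≠ 1 →
      ∑ j : {i // i ∈ Y}, U (σ j : X) (j : X) < 0)
    (K : ℕ) (x y : Fin (K * Y.card) → X)
    (hx : (∀ k, x k ∈ Y) ∧ ∀ a ∈ Y, (Finset.univ.filter fun k => x k = a).card = K)
    (hy : (∀ k, y k ∈ Y) ∧ ∀ a ∈ Y, (Finset.univ.filter fun k => y k = a).card = K)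
    (hne : x ≠ y) : ∑ k, U (y k) (x k) < 0 := by
  set ι := {i // i ∈ Y}
  -- K ≠ 0 since x ≠ y forces nonempty index type
  have hK : 0 < K := by
    by_contra h
    push_neg at h
    interval_cases K
    exact hne (funext fun k => absurd k.2 (by simp))
  have hKR : (0:ℝ) < (K:ℝ) := by exact_mod_cast hK
  set x' : Fin (K * Y.card) → ι := fun k => ⟨x k, hx.1 k⟩ with hx'
  set y' : Fin (K * Y.card) → ι := fun k => ⟨y k, hy.1 k⟩ with hy'
  set N : ι → ι → ℕ := fun i j => (Finset.univ.filter fun k => y' k = i ∧ x' k = j).card with hN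
  -- fiber count in one coordinate
  have hrow : ∀ i : ι, ∑ j : ι, N i j = K := by
    intro i
    have h1 : (Finset.univ.filter fun k => y' k = i).card = K := by
      have h2 : (Finset.univ.filter fun k => y' k = i)
          = (Finset.univ.filter fun k => y k = (i : X)) := by
        apply Finset.filter_congr
        intro k _
        exact Subtype.ext_iff
      rw [h2]
      exact hy.2 i.1 i.2
    calc ∑ j : ι, N i j = (Finset.univ.filter fun k => y' k = i).card := by
          rw [Finset.card_eq_sum_card_fiberwise (f := x') (t := Finset.univ)
            (fun k _ => Finset.mem_univ _)]
          apply Finset.sum_congr rfl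
          intro j _
          congr 1
          rw [Finset.filter_filter]
      _ = K := h1
  have hcol : ∀ j : ι, ∑ i : ι, N i j = K := by
    intro j
    have h1 : (Finset.univ.filter fun k => x' k = j).card = K := by
      have h2 : (Finset.univ.filter fun k => x' k = j)
          = (Finset.univ.filter fun k => x k = (j : X)) := by
        apply Finset.filter_congr
        intro k _
        exact Subtype.ext_iff
      rw [h2]
      exact hx.2 j.1 j.2
    calc ∑ i : ι, N i j = (Finset.univ.filter fun k => x' k = j).card := by
          rw [Finset.card_eq_sum_card_fiberwise (f := y') (t := Finset.univ)
            (fun k _ => Finset.mem_univ _)]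
          apply Finset.sum_congr rfl
          intro i _
          simp only [hN, Finset.filter_filter]
          congr 1
          apply Finset.filter_congr
          intro k _
          exact and_comm
      _ = K := h1
  -- the scaled matrix is doubly stochastic
  set M : Matrix ι ι ℝ := fun i j => (N i j : ℝ) / K with hM
  have hMds : M ∈ doublyStochastic ℝ ι := by
    rw [mem_doublyStochastic_iff_sum]
    refine ⟨fun i j => by positivity, fun i => ?_, fun j => ?_⟩
    · rw [← Finset.sum_div]
      rw [div_eq_one_iff_eq hKR.ne']
      exact_mod_cast hrow i
    · rw [← Finset.sum_div]
      rw [div_eq_one_iff_eq hKR.ne']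
      exact_mod_cast hcol j
  -- the total utility as a matrix contraction
  have hsum : ∑ k, U (y k) (x k) = ∑ i : ι, ∑ j : ι, (N i j : ℝ) * U i j := by
    have : ∀ i : ι, ∀ j : ι,
        ∑ k ∈ Finset.univ.filter (fun k => (y' k, x' k) = (i, j)), U (y k) (x k)
          = (N i j : ℝ) * U i j := by
      intro i j
      have hpred : (Finset.univ.filter fun k => (y' k, x' k) = (i, j))
          = (Finset.univ.filter fun k => y' k = i ∧ x' k = j) := by
        apply Finset.filter_congr
        intro k _
        simp [Prod.ext_iff]
      rw [hpred]
      have hconst : ∀ k ∈ Finset.univ.filter (fun k => y' k = i ∧ x' k = j),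
          U (y k) (x k) = U (i : X) (j : X) := by
        intro k hk
        simp only [Finset.mem_filter] at hk
        rw [show y k = (i : X) from congrArg Subtype.val hk.2.1,
            show x k = (j : X) from congrArg Subtype.val hk.2.2]
      rw [Finset.sum_congr rfl hconst, Finset.sum_const, nsmul_eq_mul]
    calc ∑ k, U (y k) (x k)
        = ∑ p : ι × ι, ∑ k ∈ Finset.univ.filter (fun k => (y' k, x' k) = p), U (y k) (x k) := by
          rw [Finset.sum_fiberwise Finset.univ (fun k => (y' k, x' k)) (fun k => U (y k) (x k))]
      _ = ∑ p : ι × ι, (N p.1 p.2 : ℝ) * U p.1 p.2 := by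
          exact Finset.sum_congr rfl fun p _ => this p.1 p.2
      _ = ∑ i : ι, ∑ j : ι, (N i j : ℝ) * U i j := by rw [Fintype.sum_prod_type]
  -- Birkhoff decomposition
  obtain ⟨w, hw0, hw1, hwM⟩ := exists_eq_sum_perm_of_mem_doublyStochastic hMds
  -- contraction of a permutation matrix with U
  have hperm : ∀ σ : Equiv.Perm ι,
      ∑ i : ι, ∑ j : ι, (σ.permMatrix ℝ) i j * U i j = ∑ j : ι, U ((σ⁻¹ j : ι) : X) (j : X) := by
    intro σ
    have : ∀ i : ι, ∑ j : ι, (σ.permMatrix ℝ) i j * U i j = U (i : X) ((σ i : ι) : X) := by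
      intro i
      rw [Finset.sum_eq_single (σ i)]
      · simp [Equiv.Perm.permMatrix, PEquiv.toMatrix, Equiv.toPEquiv]
      · intro j _ hj
        simp [Equiv.Perm.permMatrix, PEquiv.toMatrix, Equiv.toPEquiv, Ne.symm hj]
      · simp
    rw [Finset.sum_congr rfl fun i _ => this i]
    rw [← Equiv.sum_comp σ (fun j => U ((σ⁻¹ j : ι) : X) (j : X))]
    simp
  -- each permutation contributes a nonpositive amount
  have hc : ∀ σ : Equiv.Perm ι, ∑ j : ι, U ((σ⁻¹ j : ι) : X) (j : X) ≤ 0 := by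
    intro σ
    rcases eq_or_ne σ 1 with rfl | hσ
    · simp [hdiag]
    · exact le_of_lt (hY σ⁻¹ (by simpa using hσ))
  -- the contraction of M with U
  have hMentry : ∀ i j : ι, M i j = ∑ σ : Equiv.Perm ι, w σ * (σ.permMatrix ℝ) i j := by
    intro i j
    conv_lhs => rw [← hwM]
    simp [Matrix.sum_apply]
  have hMU : ∑ i : ι, ∑ j : ι, M i j * U i j
      = ∑ σ : Equiv.Perm ι, w σ * ∑ j : ι, U ((σ⁻¹ j : ι) : X) (j : X) := by
    calc ∑ i : ι, ∑ j : ι, M i j * U i j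
        = ∑ i : ι, ∑ j : ι, ∑ σ : Equiv.Perm ι,
            w σ * (σ.permMatrix ℝ) i j * U (i : X) (j : X) := by
          apply Finset.sum_congr rfl
          intro i _
          apply Finset.sum_congr rfl
          intro j _
          rw [hMentry, Finset.sum_mul]
      _ = ∑ σ : Equiv.Perm ι, ∑ i : ι, ∑ j : ι,
            w σ * (σ.permMatrix ℝ) i j * U (i : X) (j : X) := by
          rw [show (∑ i : ι, ∑ j : ι, ∑ σ : Equiv.Perm ι,
              w σ * (σ.permMatrix ℝ) i j * U (i : X) (j : X))
              = ∑ i : ι, ∑ σ : Equiv.Perm ι, ∑ j : ι,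
              w σ * (σ.permMatrix ℝ) i j * U (i : X) (j : X) from
            Finset.sum_congr rfl fun i _ => Finset.sum_comm]
          exact Finset.sum_comm
      _ = ∑ σ : Equiv.Perm ι, w σ * ∑ j : ι, U ((σ⁻¹ j : ι) : X) (j : X) := by
          apply Finset.sum_congr rfl
          intro σ _
          rw [← hperm σ, Finset.mul_sum]
          apply Finset.sum_congr rfl
          intro i _
          rw [Finset.mul_sum]
          apply Finset.sum_congr rfl
          intro j _
          ring
  -- there is a non-identity permutation with positive weight
  have hex : ∃ σ : Equiv.Perm ι, σ ≠ 1 ∧ 0 < w σ := by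
    by_contra h
    push_neg at h
    -- then all weight is on the identity, so M = 1, so x = y
    apply hne
    funext k
    have hwz : ∀ σ : Equiv.Perm ι, σ ≠ 1 → w σ = 0 :=
      fun σ hσ => le_antisymm (h σ hσ) (hw0 σ)
    have hw1' : w 1 = 1 := by
      have := Finset.sum_eq_single (1 : Equiv.Perm ι) (fun σ _ hσ => hwz σ hσ)
        (fun hmem => absurd (Finset.mem_univ _) hmem) (f := w)
      rw [← hw1, this]
    have hpm1 : (1 : Equiv.Perm ι).permMatrix ℝ = 1 := by
      ext i j
      simp [Equiv.Perm.permMatrix, PEquiv.toMatrix, Equiv.toPEquiv, Matrix.one_apply, eq_comm]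
    have hMid : M = 1 := by
      rw [← hwM]
      have hterm : ∀ σ : Equiv.Perm ι, w σ • σ.permMatrix ℝ
          = if σ = 1 then (1 : Matrix ι ι ℝ) else 0 := by
        intro σ
        rcases eq_or_ne σ 1 with rfl | hσ
        · simp [hw1', hpm1]
        · simp [hσ, hwz σ hσ]
      rw [Finset.sum_congr rfl fun σ _ => hterm σ,
        Finset.sum_ite_eq' Finset.univ (1 : Equiv.Perm ι) (fun _ => (1 : Matrix ι ι ℝ))]
      simp
    -- deduce y' k = x' k
    have hNk : 0 < N (y' k) (x' k) := by
      rw [hN]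
      apply Finset.card_pos.mpr
      exact ⟨k, by simp⟩
    have hMk : 0 < M (y' k) (x' k) := by
      rw [hM]
      apply div_pos _ hKR
      exact_mod_cast hNk
    rw [hMid] at hMk
    by_contra hxy
    have : y' k ≠ x' k := fun h' => hxy (congrArg Subtype.val h').symm
    rw [Matrix.one_apply_ne this] at hMk
    exact lt_irrefl _ hMk
  obtain ⟨σ₀, hσ₀, hwσ₀⟩ := hex
  -- conclude strict negativity
  have hlt : ∑ σ : Equiv.Perm ι, w σ * ∑ j : ι, U ((σ⁻¹ j : ι) : X) (j : X) < 0 := by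
    have hterm : ∀ σ : Equiv.Perm ι, w σ * ∑ j : ι, U ((σ⁻¹ j : ι) : X) (j : X) ≤ 0 :=
      fun σ => mul_nonpos_of_nonneg_of_nonpos (hw0 σ) (hc σ)
    have hstrict : w σ₀ * ∑ j : ι, U ((σ₀⁻¹ j : ι) : X) (j : X) < 0 := by
      apply mul_neg_of_pos_of_neg hwσ₀
      exact hY σ₀⁻¹ (by simpa using hσ₀)
    rw [← Finset.add_sum_erase Finset.univ _ (Finset.mem_univ σ₀)]
    have hrest : ∑ σ ∈ Finset.univ.erase σ₀, w σ * ∑ j : ι, U ((σ⁻¹ j : ι) : X) (j : X) ≤ 0 :=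
      Finset.sum_nonpos fun σ _ => hterm σ
    linarith
  have : ∑ k, U (y k) (x k) = (K : ℝ) * ∑ i : ι, ∑ j : ι, M i j * U i j := by
    rw [hsum, Finset.mul_sum]
    apply Finset.sum_congr rfl
    intro i _
    rw [Finset.mul_sum]
    apply Finset.sum_congr rfl
    intro j _
    rw [hM]
    field_simp
  rw [this, hMU]
  exact mul_neg_of_pos_of_neg hKR hlt

/-- If `Y ⊆ X` satisfies `∑_{i,j∈Y} Q(i,j)U(i,j) < 0` for every non-identity
permutation matrix `Q` on `Y`, then for every `K` the uniform type class
`T_Y^K ⊆ X^{K|Y|}` is an independent set in the sender graph `G_s^{K|Y|}`. -/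
theorem typeClass_indep_of_perm_condition {X : Type*} [Fintype X] [DecidableEq X]
    (U : X → X → ℝ) (hdiag : ∀ i, U i i = 0) (Y : Finset X)
    (hY : ∀ σ : Equiv.Perm {i // i ∈ Y}, σ ≠ 1 →
      ∑ j : {i // i ∈ Y}, U (σ j : X) (j : X) < 0)
    (K : ℕ) (x y : Fin (K * Y.card) → X)
    (hx : (∀ k, x k ∈ Y) ∧ ∀ a ∈ Y, (Finset.univ.filter fun k => x k = a).card = K)
    (hy : (∀ k, y k ∈ Y) ∧ ∀ a ∈ Y, (Finset.univ.filter fun k => y k = a).card = K) :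
    ¬ (senderGraph U (K * Y.card)).Adj x y := by
  rintro ⟨hne, h | h⟩
  · exact absurd h (not_le.mpr (sum_util_neg_of_ne U hdiag Y hY K x y hx hy hne))
  · exact absurd h (not_le.mpr (sum_util_neg_of_ne U hdiag Y hY K y x hy hx hne.symm))
end

section
/- Let 𝒳 be a finite alphabet and 𝒰 a utility with zero diagonal. Let 𝒴 ⊆ 𝒳 and suppose for all K ∈ ℕ the uniform type class T_𝒴^K is an independent set in the sender graph G_s^{K|𝒴|}. Then Ξ(𝒰) = lim_n α(G_sⁿ)^{1/n} ≥ |𝒴|. -/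
open Finset Filter Real Topology

section AuxiliaryLemmas

open Nat


-- factorial bounds via Stirling
lemma fact_lower (n : ℕ) (hn : 1 ≤ n) : ((n : ℝ) / Real.exp 1) ^ n ≤ (n ! : ℝ) := by
  have ha : Antitone (Stirling.stirlingSeq ∘ Nat.succ) := Stirling.stirlingSeq'_antitone
  have ht : Filter.Tendsto (Stirling.stirlingSeq ∘ Nat.succ) atTop (𝓝 (Real.sqrt π)) :=
    Stirling.tendsto_stirlingSeq_sqrt_pi.comp (tendsto_add_atTop_nat 1)
  have h1 : Real.sqrt π ≤ Stirling.stirlingSeq n := by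
    have := ha.le_of_tendsto ht (n - 1)
    simpa [Function.comp, Nat.sub_add_cancel hn] using this
  have hπ : (1:ℝ) ≤ Real.sqrt π := Real.one_le_sqrt.mpr (by linarith [Real.pi_gt_three])
  have hsq : (1:ℝ) ≤ Real.sqrt (2 * n) := by
    rw [Real.one_le_sqrt]
    have : (1:ℝ) ≤ (n:ℝ) := by exact_mod_cast hn
    linarith
  have hpow : (0:ℝ) ≤ ((n:ℝ) / Real.exp 1) ^ n := by positivity
  have h2 : Real.sqrt π * (Real.sqrt (2*n) * ((n:ℝ)/Real.exp 1)^n) ≤ (n ! : ℝ) := by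
    rw [Stirling.stirlingSeq] at h1
    have hd : (0:ℝ) < Real.sqrt (2*n) * ((n:ℝ)/Real.exp 1)^n := by
      have hn' : (0:ℝ) < (n:ℝ) := by exact_mod_cast hn
      positivity
    calc Real.sqrt π * (Real.sqrt (2*n) * ((n:ℝ)/Real.exp 1)^n)
        ≤ ((n ! : ℝ) / (Real.sqrt (2*n) * ((n:ℝ)/Real.exp 1)^n)) * (Real.sqrt (2*n) * ((n:ℝ)/Real.exp 1)^n) := by
          apply mul_le_mul_of_nonneg_right h1 hd.le
      _ = (n ! : ℝ) := by field_simp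
  nlinarith [mul_le_mul hπ hsq (by norm_num) (by linarith)]

lemma fact_upper (K : ℕ) (hK : 1 ≤ K) :
    (K ! : ℝ) ≤ Real.exp 1 * Real.sqrt K * ((K : ℝ) / Real.exp 1) ^ K := by
  have h1 : Stirling.stirlingSeq K ≤ Real.exp 1 / Real.sqrt 2 := by
    have := Stirling.stirlingSeq'_antitone (Nat.zero_le (K - 1))
    simpa [Function.comp, Nat.sub_add_cancel hK, Stirling.stirlingSeq_one] using this
  rw [Stirling.stirlingSeq] at h1
  have hd : (0:ℝ) < Real.sqrt (2*K) * ((K:ℝ)/Real.exp 1)^K := by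
    have hn' : (0:ℝ) < (K:ℝ) := by exact_mod_cast hK
    positivity
  rw [div_le_iff₀ hd] at h1
  calc (K ! : ℝ) ≤ Real.exp 1 / Real.sqrt 2 * (Real.sqrt (2*K) * ((K:ℝ)/Real.exp 1)^K) := h1
    _ = Real.exp 1 * Real.sqrt K * ((K:ℝ)/Real.exp 1)^K := by
        rw [Real.sqrt_mul (by norm_num : (0:ℝ) ≤ 2)]
        have : Real.sqrt 2 ≠ 0 := by positivity
        field_simp


lemma factorial_le_typeclass {X : Type*} [Fintype X] [DecidableEq X]
    (Y : Finset X) (K : ℕ) :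
    (K * Y.card)! ≤ (K !) ^ Y.card *
      (Finset.univ.filter fun g : Fin (K * Y.card) → X =>
        (∀ k, g k ∈ Y) ∧ ∀ a ∈ Y, (Finset.univ.filter fun k => g k = a).card = K).card := by
  classical
  set m := Y.card with hm
  set T : Finset (Fin (K * m) → X) := Finset.univ.filter fun g =>
      (∀ k, g k ∈ Y) ∧ ∀ a ∈ Y, (Finset.univ.filter fun k => g k = a).card = K with hT
  let el : Fin m → X := fun i => (Y.equivFin.symm i : X)
  have hel_mem : ∀ i, el i ∈ Y := fun i => (Y.equivFin.symm i).2
  have hel_inj : Function.Injective el := fun i j h =>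
    Y.equivFin.symm.injective (Subtype.coe_injective h)
  have hel_surj : ∀ a ∈ Y, ∃ i, el i = a := fun a ha => ⟨Y.equivFin ⟨a, ha⟩, by simp [el]⟩
  let f0 : Fin (K * m) → X := fun k => el (finProdFinEquiv.symm k).2
  have hf0_mem : ∀ k, f0 k ∈ Y := fun k => hel_mem _
  have hcount0 : ∀ a ∈ Y, (Finset.univ.filter fun k : Fin (K * m) => f0 k = a).card = K := by
    intro a ha
    obtain ⟨i, rfl⟩ := hel_surj a ha
    have h1 : (Finset.univ.filter fun k : Fin (K * m) => f0 k = el i).card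
        = (Finset.univ.filter fun p : Fin K × Fin m => p.2 = i).card := by
      refine Finset.card_equiv finProdFinEquiv.symm fun k => ?_
      simp only [Finset.mem_filter, Finset.mem_univ, true_and, f0]
      exact ⟨fun h => hel_inj h, fun h => by rw [h]⟩
    have h2 : (Finset.univ.filter fun p : Fin K × Fin m => p.2 = i) = Finset.univ ×ˢ {i} := by
      ext p
      simp only [Finset.mem_filter, Finset.mem_univ, true_and, Finset.mem_product,
        Finset.mem_singleton]
    rw [h1, h2, Finset.card_product]
    simp
  have hcount : ∀ (σ : Equiv.Perm (Fin (K * m))) (a : X), a ∈ Y →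
      (Finset.univ.filter fun k => f0 (σ k) = a).card = K := by
    intro σ a ha
    have : (Finset.univ.filter fun k => f0 (σ k) = a).card
        = (Finset.univ.filter fun k : Fin (K * m) => f0 k = a).card :=
      Finset.card_equiv σ (fun k => by simp)
    rw [this]; exact hcount0 a ha
  -- stabilizer-like set bound
  have hS : (Finset.univ.filter fun τ : Equiv.Perm (Fin (K * m)) => f0 ∘ τ = f0).card
      ≤ (K !) ^ m := by
    rw [← Fintype.card_subtype]
    have hφ : Function.Injective
        (fun (τ : {τ : Equiv.Perm (Fin (K * m)) // f0 ∘ τ = f0})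
          (a : {a // a ∈ Y}) =>
            Equiv.Perm.subtypePerm τ.1 (p := fun k => f0 k = a.1)
              (fun k => by
                have hh := congrFun τ.2 k
                simp only [Function.comp_apply] at hh
                simp only [hh])) := by
      intro τ τ' h
      apply Subtype.ext; apply Equiv.ext; intro k
      have h1 := congrFun h ⟨f0 k, hf0_mem k⟩
      have h2 := congrArg (fun (pp : Equiv.Perm {k' : Fin (K * m) // f0 k' = f0 k}) =>
        Subtype.val (pp ⟨k, rfl⟩)) h1
      simpa [Equiv.Perm.subtypePerm_apply] using h2
    calc Fintype.card {τ : Equiv.Perm (Fin (K * m)) // f0 ∘ τ = f0}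
        ≤ Fintype.card (∀ a : {a // a ∈ Y}, Equiv.Perm {k : Fin (K * m) // f0 k = a.1}) :=
          Fintype.card_le_of_injective _ hφ
      _ = (K !) ^ m := by
          rw [Fintype.card_pi]
          have he : ∀ a : {a // a ∈ Y},
              Fintype.card (Equiv.Perm {k : Fin (K * m) // f0 k = a.1}) = K ! := by
            intro a
            rw [Fintype.card_perm, Fintype.card_subtype, hcount0 a.1 a.2]
          rw [Finset.prod_congr rfl (fun a _ => he a), Finset.prod_const, Finset.card_univ,
            Fintype.card_coe]
  -- fibers of σ ↦ f0 ∘ σ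
  have hfiber : ∀ g : Fin (K * m) → X,
      (Finset.univ.filter fun σ : Equiv.Perm (Fin (K * m)) => f0 ∘ σ = g).card ≤ (K !) ^ m := by
    intro g
    rcases Finset.eq_empty_or_nonempty
        (Finset.univ.filter fun σ : Equiv.Perm (Fin (K * m)) => f0 ∘ σ = g) with he | ⟨σ0, hσ0⟩
    · rw [he]; exact Nat.zero_le _
    · have hσ0' : f0 ∘ σ0 = g := (Finset.mem_filter.mp hσ0).2
      refine le_trans (Finset.card_le_card_of_injOn (fun σ => σ * σ0⁻¹) ?_ ?_) hS
      · intro σ hσ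
        rw [Finset.mem_coe, Finset.mem_filter] at hσ ⊢
        refine ⟨Finset.mem_univ _, ?_⟩
        funext k
        have h1 : f0 (σ (σ0⁻¹ k)) = g (σ0⁻¹ k) := congrFun hσ.2 _
        have h2 : g (σ0⁻¹ k) = f0 (σ0 (σ0⁻¹ k)) := (congrFun hσ0' _).symm
        simp only [Function.comp_apply, Equiv.Perm.mul_apply, h1, h2]
        exact congrArg f0 (σ0.apply_symm_apply k)
      · intro σ _ σ' _ h
        exact mul_right_cancel h
  -- total count
  have h1 : (Finset.univ : Finset (Equiv.Perm (Fin (K * m)))).card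
      ≤ (K !) ^ m * (Finset.univ.image fun σ : Equiv.Perm (Fin (K * m)) => f0 ∘ σ).card :=
    Finset.card_le_mul_card_image _ _ (fun g _ => hfiber g)
  have h2 : (Finset.univ.image fun σ : Equiv.Perm (Fin (K * m)) => f0 ∘ σ) ⊆ T := by
    intro g hg
    obtain ⟨σ, -, rfl⟩ := Finset.mem_image.mp hg
    exact Finset.mem_filter.mpr ⟨Finset.mem_univ _,
      fun k => hf0_mem (σ k), fun a ha => hcount σ a ha⟩
  calc (K * m)! = (Finset.univ : Finset (Equiv.Perm (Fin (K * m)))).card := by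
        rw [Finset.card_univ, Fintype.card_perm, Fintype.card_fin]
    _ ≤ (K !) ^ m * (Finset.univ.image fun σ : Equiv.Perm (Fin (K * m)) => f0 ∘ σ).card := h1
    _ ≤ (K !) ^ m * T.card := Nat.mul_le_mul_left _ (Finset.card_le_card h2)

lemma typeclass_pow_bound' (m K N : ℕ) (hK : 1 ≤ K) (hm : 0 < m)
    (h : (K * m)! ≤ (K !) ^ m * N) :
    ((m : ℝ)) ^ (K * m) ≤ (3 * (K : ℝ)) ^ m * (N : ℝ) := by
  have hn : 1 ≤ K * m := Nat.one_le_iff_ne_zero.mpr (by positivity)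
  have hA : (0:ℝ) < (K : ℝ) := by exact_mod_cast hK
  have hc : (0:ℝ) < Real.exp 1 := Real.exp_pos 1
  have hlo := fact_lower (K * m) hn
  have hup := fact_upper K hK
  have h3 : ((K * m)! : ℝ) ≤ ((K ! : ℕ) : ℝ) ^ m * (N : ℝ) := by exact_mod_cast h
  have hfacnn : (0:ℝ) ≤ ((K ! : ℕ) : ℝ) := Nat.cast_nonneg _
  have hup' : ((K ! : ℕ) : ℝ) ^ m ≤ (Real.exp 1 * Real.sqrt K * ((K:ℝ)/Real.exp 1) ^ K) ^ m :=
    pow_le_pow_left₀ hfacnn hup m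
  have key : ((K:ℝ) * m / Real.exp 1) ^ (K * m)
      ≤ (Real.exp 1 * Real.sqrt K) ^ m * ((K:ℝ)/Real.exp 1) ^ (K * m) * N := by
    have e1 : (Real.exp 1 * Real.sqrt K * ((K:ℝ)/Real.exp 1) ^ K) ^ m
        = (Real.exp 1 * Real.sqrt K) ^ m * ((K:ℝ)/Real.exp 1) ^ (K * m) := by
      rw [mul_pow, ← pow_mul]
    have c1 : ((K * m : ℕ) : ℝ) = (K : ℝ) * m := by push_cast; ring
    calc ((K:ℝ) * m / Real.exp 1) ^ (K * m) = (((K * m : ℕ) : ℝ) / Real.exp 1) ^ (K * m) := by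
          rw [c1]
      _ ≤ ((K * m)! : ℝ) := hlo
      _ ≤ ((K ! : ℕ) : ℝ) ^ m * N := h3
      _ ≤ (Real.exp 1 * Real.sqrt K * ((K:ℝ)/Real.exp 1) ^ K) ^ m * N := by
          apply mul_le_mul_of_nonneg_right hup' (Nat.cast_nonneg _)
      _ = (Real.exp 1 * Real.sqrt K) ^ m * ((K:ℝ)/Real.exp 1) ^ (K * m) * N := by rw [e1]
  have hsplit : ((K:ℝ) * m / Real.exp 1) ^ (K * m)
      = (m : ℝ) ^ (K * m) * ((K:ℝ)/Real.exp 1) ^ (K * m) := by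
    rw [← mul_pow]; congr 1; field_simp
  have hpos : (0:ℝ) < ((K:ℝ)/Real.exp 1) ^ (K * m) := by positivity
  have key2 : (m : ℝ) ^ (K * m) ≤ (Real.exp 1 * Real.sqrt K) ^ m * N := by
    rw [hsplit] at key
    have := (mul_le_mul_iff_of_pos_right hpos).mp (by
      calc (m : ℝ) ^ (K * m) * ((K:ℝ)/Real.exp 1) ^ (K * m)
          ≤ (Real.exp 1 * Real.sqrt K) ^ m * ((K:ℝ)/Real.exp 1) ^ (K * m) * N := key
        _ = (Real.exp 1 * Real.sqrt K) ^ m * N * ((K:ℝ)/Real.exp 1) ^ (K * m) := by ring)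
    exact this
  refine key2.trans ?_
  apply mul_le_mul_of_nonneg_right _ (Nat.cast_nonneg _)
  apply pow_le_pow_left₀ (by positivity)
  have h31 : Real.exp 1 ≤ 3 := by
    have := Real.exp_one_lt_d9; linarith
  have hsq : Real.sqrt K ≤ (K : ℝ) := by
    nlinarith [Real.sq_sqrt hA.le, Real.sqrt_nonneg (K:ℝ), Real.one_le_sqrt.mpr (show (1:ℝ) ≤ K from by exact_mod_cast hK)]
  calc Real.exp 1 * Real.sqrt K ≤ 3 * (K:ℝ) :=
    mul_le_mul h31 hsq (Real.sqrt_nonneg _) (by norm_num)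

end AuxiliaryLemmas

set_option maxHeartbeats 1600000 in
/-- If for every `K` the uniform type class `T_Y^K` is an independent set in the
sender graph `G_s^{K|Y|}`, then `Ξ(U) ≥ |Y|`. -/
theorem capacity_ge_card_of_typeClass_indep {X : Type*} [Fintype X] [DecidableEq X]
    (U : X → X → ℝ) (hdiag : ∀ i, U i i = 0) (Y : Finset X)
    (hT : ∀ K : ℕ, ∀ x y : Fin (K * Y.card) → X,
        ((∀ k, x k ∈ Y) ∧ ∀ a ∈ Y, (Finset.univ.filter fun k => x k = a).card = K) →
        ((∀ k, y k ∈ Y) ∧ ∀ a ∈ Y, (Finset.univ.filter fun k => y k = a).card = K) →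
        ¬ (senderGraph U (K * Y.card)).Adj x y)
    (L : ℝ) (hL : Filter.Tendsto (capSeq U) Filter.atTop (nhds L)) :
    (Y.card : ℝ) ≤ L := by
  rcases Nat.eq_zero_or_pos Y.card with hm0 | hm
  · rw [hm0]
    exact_mod_cast ge_of_tendsto' hL fun n => Real.rpow_nonneg (Nat.cast_nonneg _) _
  set m := Y.card with hmdef
  -- key pointwise bound
  have key : ∀ K : ℕ, 1 ≤ K →
      (m : ℝ) * (3 * (K : ℝ)) ^ (-(1 : ℝ) / K) ≤ capSeq U (K * m) := by
    intro K hK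
    set T : Finset (Fin (K * m) → X) := Finset.univ.filter fun g =>
        (∀ k, g k ∈ Y) ∧ ∀ a ∈ Y, (Finset.univ.filter fun k => g k = a).card = K with hTdef
    have hN : ((m : ℝ)) ^ (K * m) ≤ (3 * (K : ℝ)) ^ m * (T.card : ℝ) :=
      typeclass_pow_bound' m K T.card hK hm (factorial_le_typeclass Y K)
    have hIndep : T.card ≤ indepNum (senderGraph U (K * m)) := by
      apply le_csSup
      · refine ⟨Fintype.card (Fin (K * m) → X), ?_⟩
        rintro m' ⟨s, rfl, -⟩
        exact le_trans (Finset.card_le_univ s) (le_of_eq Finset.card_univ)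
      · refine ⟨T, rfl, ?_⟩
        intro x hx y hy
        rw [Finset.mem_filter] at hx hy
        exact hT K x y hx.2 hy.2
    -- pass to rpow
    have hKpos : (0:ℝ) < (K:ℝ) := by exact_mod_cast hK
    have hmpos : (0:ℝ) < (m:ℝ) := by exact_mod_cast hm
    have hnR : (0:ℝ) < ((K * m : ℕ) : ℝ) := by exact_mod_cast Nat.mul_pos hK hm
    have h3K : (0:ℝ) < 3 * (K:ℝ) := by linarith
    have hα : ((m : ℝ)) ^ (K * m) / (3 * (K : ℝ)) ^ m
        ≤ (indepNum (senderGraph U (K * m)) : ℝ) := by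
      rw [div_le_iff₀ (by positivity)]
      calc ((m : ℝ)) ^ (K * m) ≤ (3 * (K : ℝ)) ^ m * (T.card : ℝ) := hN
        _ ≤ (3 * (K : ℝ)) ^ m * (indepNum (senderGraph U (K * m)) : ℝ) := by
            apply mul_le_mul_of_nonneg_left _ (by positivity)
            exact_mod_cast hIndep
        _ = (indepNum (senderGraph U (K * m)) : ℝ) * (3 * (K : ℝ)) ^ m := by ring
    have hrpow := Real.rpow_le_rpow
      (div_nonneg (pow_nonneg hmpos.le _) (pow_nonneg h3K.le _)) hα
      (one_div_nonneg.mpr hnR.le)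
    have hLHS : (((m : ℝ)) ^ (K * m) / (3 * (K : ℝ)) ^ m) ^ (1 / ((K * m : ℕ) : ℝ))
        = (m : ℝ) * (3 * (K : ℝ)) ^ (-(1 : ℝ) / (K : ℝ)) := by
      rw [Real.div_rpow (pow_nonneg hmpos.le _) (pow_nonneg h3K.le _)]
      rw [← Real.rpow_natCast (m:ℝ) (K * m), ← Real.rpow_natCast (3 * (K:ℝ)) m]
      rw [← Real.rpow_mul hmpos.le, ← Real.rpow_mul h3K.le]
      have e1 : ((K * m : ℕ) : ℝ) * (1 / ((K * m : ℕ) : ℝ)) = 1 :=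
        mul_one_div_cancel hnR.ne'
      have e2 : ((m : ℕ) : ℝ) * (1 / ((K * m : ℕ) : ℝ)) = 1 / (K : ℝ) := by
        rw [Nat.cast_mul, mul_one_div, mul_comm (K:ℝ) (m:ℝ), ← div_div, div_self hmpos.ne']
      rw [e1, e2, Real.rpow_one]
      rw [div_eq_mul_inv, ← Real.rpow_neg h3K.le]
      congr 1
      rw [neg_div]
    calc (m : ℝ) * (3 * (K : ℝ)) ^ (-(1 : ℝ) / K)
        = (((m : ℝ)) ^ (K * m) / (3 * (K : ℝ)) ^ m) ^ (1 / ((K * m : ℕ) : ℝ)) := hLHS.symm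
      _ ≤ (indepNum (senderGraph U (K * m)) : ℝ) ^ (1 / ((K * m : ℕ) : ℝ)) := hrpow
      _ = capSeq U (K * m) := rfl
  -- limits
  have t1 : Filter.Tendsto (fun K : ℕ => Real.log (3 * (K:ℝ)) / (K:ℝ)) atTop (𝓝 0) := by
    have hlog : Filter.Tendsto (fun x : ℝ => Real.log x / x) atTop (𝓝 0) :=
      Real.isLittleO_log_id_atTop.tendsto_div_nhds_zero
    have h3 : Filter.Tendsto (fun x : ℝ => 3 * x) atTop atTop :=
      Filter.tendsto_id.const_mul_atTop (by norm_num)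
    have hcomp := ((hlog.comp h3).comp tendsto_natCast_atTop_atTop).mul_const (3:ℝ)
    rw [zero_mul] at hcomp
    apply hcomp.congr'
    filter_upwards [Filter.eventually_ge_atTop 1] with K hK
    have hKpos : (0:ℝ) < (K:ℝ) := by exact_mod_cast hK
    show Real.log (3 * (K:ℝ)) / (3 * (K:ℝ)) * 3 = Real.log (3 * (K:ℝ)) / (K:ℝ)
    field_simp
  have t2 : Filter.Tendsto (fun K : ℕ => (3 * (K:ℝ)) ^ (-(1:ℝ) / (K:ℝ))) atTop (𝓝 1) := by
    have he : Filter.Tendsto (fun K : ℕ => Real.exp (-(Real.log (3 * (K:ℝ)) / (K:ℝ))))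
        atTop (𝓝 1) := by
      have hneg : Filter.Tendsto (fun K : ℕ => -(Real.log (3 * (K:ℝ)) / (K:ℝ)))
          atTop (𝓝 0) := by simpa using t1.neg
      have := (Real.continuous_exp.tendsto 0).comp hneg
      simpa [Function.comp_def] using this
    apply he.congr'
    filter_upwards [Filter.eventually_ge_atTop 1] with K hK
    have hKpos : (0:ℝ) < (K:ℝ) := by exact_mod_cast hK
    rw [Real.rpow_def_of_pos (by linarith)]
    congr 1
    rw [neg_div]
    ring
  have t3 : Filter.Tendsto (fun K : ℕ => (m : ℝ) * (3 * (K:ℝ)) ^ (-(1:ℝ) / (K:ℝ)))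
      atTop (𝓝 ((m:ℝ) * 1)) := tendsto_const_nhds.mul t2
  have t4 : Filter.Tendsto (fun K : ℕ => capSeq U (K * m)) atTop (𝓝 L) :=
    hL.comp (Filter.tendsto_atTop_mono (fun K => Nat.le_mul_of_pos_right K hm)
      Filter.tendsto_id)
  have := le_of_tendsto_of_tendsto t3 t4 (by
    filter_upwards [Filter.eventually_ge_atTop 1] with K hK
    exact key K hK)
  simpa using this
end

section
/- Let 𝒰 be a utility with zero diagonal, and define its symmetric part 𝒰^Sym(i,j) = (𝒰(i,j) + 𝒰(j,i))/2 with induced sender graph G_s^Sym. If 𝒴 ⊆ 𝒳 satisfies ∑_{i,j∈𝒴} Q(i,j)𝒰(i,j) < 0 for every non-identity permutation matrix Q on 𝒴, then 𝒴 is an independent set in G_s^Sym. Hence Γ(𝒰) ≤ α(G_s^Sym). -/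
open Finset Filter Real Topology

/-- `Γ(U)`: the maximum size of a set `Y ⊆ X` feasible for the
permutation-matrix optimization `𝒪(U)`. -/
noncomputable def gammaU {X : Type*} [Fintype X] (U : X → X → ℝ) : ℕ :=
  sSup {m | ∃ Y : Finset X, Y.card = m ∧
    ∀ σ : Equiv.Perm {i // i ∈ Y}, σ ≠ 1 →
      ∑ j : {i // i ∈ Y}, U (σ j : X) (j : X) < 0}


lemma indep_of_feasible {X : Type*} [Fintype X]
    (U : X → X → ℝ) (hdiag : ∀ i, U i i = 0) (Y : Finset X)
    (hY : ∀ σ : Equiv.Perm {i // i ∈ Y}, σ ≠ 1 →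
      ∑ j : {i // i ∈ Y}, U (σ j : X) (j : X) < 0) :
    ∀ i ∈ Y, ∀ j ∈ Y, ¬ (baseGraph (fun a b => (U a b + U b a) / 2)).Adj i j := by
  classical
  intro i hi j hj hadj
  obtain ⟨hne, hpos⟩ := hadj
  set a : {x // x ∈ Y} := ⟨i, hi⟩ with ha
  set b : {x // x ∈ Y} := ⟨j, hj⟩ with hb
  have hab : a ≠ b := by simp [ha, hb, Subtype.ext_iff]; exact hne
  have hσ : Equiv.swap a b ≠ 1 := by
    intro h
    apply hab
    have := congrArg (fun e : Equiv.Perm {x // x ∈ Y} => e a) h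
    simpa [Equiv.swap_apply_left] using this.symm
  have hs := hY (Equiv.swap a b) hσ
  have hsum : ∑ k : {x // x ∈ Y}, U ((Equiv.swap a b) k : X) (k : X)
      = U j i + U i j := by
    rw [← Finset.sum_subset (Finset.subset_univ ({a, b} : Finset _))]
    · rw [Finset.sum_pair hab]
      simp [ha, hb, Equiv.swap_apply_left, Equiv.swap_apply_right]
    · intro k _ hk
      simp only [Finset.mem_insert, Finset.mem_singleton, not_or] at hk
      rw [Equiv.swap_apply_of_ne_of_ne hk.1 hk.2, hdiag]
  rw [hsum] at hs
  rcases hpos with h | h <;> simp at h <;> linarith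

/-- If `Y` is feasible for `𝒪(U)`, then `Y` is an independent set in the sender
graph of the symmetric part `U^Sym`; hence `Γ(U) ≤ α(G_s^Sym)`. -/
theorem feasible_indep_symmetric_part {X : Type*} [Fintype X]
    (U : X → X → ℝ) (hdiag : ∀ i, U i i = 0) (Y : Finset X)
    (hY : ∀ σ : Equiv.Perm {i // i ∈ Y}, σ ≠ 1 →
      ∑ j : {i // i ∈ Y}, U (σ j : X) (j : X) < 0) :
    (∀ i ∈ Y, ∀ j ∈ Y, ¬ (baseGraph (fun a b => (U a b + U b a) / 2)).Adj i j) ∧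
    gammaU U ≤ indepNum (baseGraph (fun a b => (U a b + U b a) / 2)) := by
  refine ⟨indep_of_feasible U hdiag Y hY, ?_⟩
  apply csSup_le_csSup
  · exact ⟨Fintype.card X, fun m ⟨s, hs, _⟩ => hs ▸ s.card_le_univ⟩
  · exact ⟨Y.card, Y, rfl, hY⟩
  · rintro m ⟨Z, hZ, hZfeas⟩
    exact ⟨Z, hZ, indep_of_feasible U hdiag Z hZfeas⟩
end

section
/- Let 𝒰 be a utility with zero diagonal and 𝒰^Sym(i,j) = (𝒰(i,j) + 𝒰(j,i))/2 its symmetric part. Then for every n, the sender graph of 𝒰^Sym on 𝒳ⁿ is a subgraph of the sender graph of 𝒰 on 𝒳ⁿ, and consequently Ξ(𝒰) ≤ Ξ(𝒰^Sym). -/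
open Finset Filter Real Topology

/-- The sender graph of the symmetric part `U^Sym` is a subgraph of the sender
graph of `U`, hence `Ξ(U) ≤ Ξ(U^Sym)`. -/
theorem capacity_le_of_symmetric_part {X : Type*} [Fintype X]
    (U : X → X → ℝ) (hdiag : ∀ i, U i i = 0)
    (Usym : X → X → ℝ) (hUsym : ∀ i j, Usym i j = (U i j + U j i) / 2) :
    (∀ n, senderGraph Usym n ≤ senderGraph U n) ∧
    ∀ L L' : ℝ, Filter.Tendsto (capSeq U) Filter.atTop (nhds L) →
      Filter.Tendsto (capSeq Usym) Filter.atTop (nhds L') → L ≤ L' := by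
  have hle : ∀ n, senderGraph Usym n ≤ senderGraph U n := by
    intro n x y hxy
    refine ⟨hxy.1, ?_⟩
    have h : 0 ≤ ∑ k, Usym (y k) (x k) ∨ 0 ≤ ∑ k, Usym (x k) (y k) := hxy.2
    have hs1 : ∑ k, Usym (y k) (x k) = ((∑ k, U (y k) (x k)) + ∑ k, U (x k) (y k)) / 2 := by
      simp only [hUsym]
      rw [← Finset.sum_add_distrib, Finset.sum_div]
    have hs2 : ∑ k, Usym (x k) (y k) = ((∑ k, U (y k) (x k)) + ∑ k, U (x k) (y k)) / 2 := by
      simp only [hUsym]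
      rw [← Finset.sum_add_distrib, Finset.sum_div]
      exact Finset.sum_congr rfl fun k _ => by ring
    have hsum : 0 ≤ ((∑ k, U (y k) (x k)) + ∑ k, U (x k) (y k)) / 2 := by
      rcases h with h | h
      · rwa [hs1] at h
      · rwa [hs2] at h
    by_contra hc
    push_neg at hc
    linarith [hc.1, hc.2]
  refine ⟨hle, fun L L' hL hL' => ?_⟩
  refine le_of_tendsto_of_tendsto' hL hL' fun n => ?_
  have hmono : indepNum (senderGraph U n) ≤ indepNum (senderGraph Usym n) := by
    unfold indepNum
    apply csSup_le_csSup
    · refine ⟨Fintype.card (Fin n → X), fun m hm => ?_⟩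
      obtain ⟨s, hs, _⟩ := hm
      rw [← hs]
      exact s.card_le_univ.trans_eq (by simp)
    · exact ⟨0, ∅, by simp⟩
    · rintro m ⟨s, hs, hind⟩
      exact ⟨s, hs, fun x hx y hy hadj => hind x hx y hy (hle n hadj)⟩
  unfold capSeq
  apply Real.rpow_le_rpow (by positivity) (by exact_mod_cast hmono)
  positivity
end

section
/- Let 𝒰 be a symmetric utility (𝒰(i,j) = 𝒰(j,i)) with zero diagonal, inducing base sender graph G_s. Then for every n, the strong power G_s^{⊠n} is a subgraph of the sender graph G_sⁿ on 𝒳ⁿ, hence α(G_sⁿ) ≤ α(G_s^{⊠n}) and Ξ(𝒰) ≤ Θ(G_s). -/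
open Finset Filter Real Topology

/-- For a symmetric utility, the strong power `G_s^{⊠n}` of the base sender
graph is a subgraph of the sender graph `G_s^n`, hence
`α(G_s^n) ≤ α(G_s^{⊠n})` and `Ξ(U) ≤ Θ(G_s)`. -/
theorem capacity_le_shannon_of_symmetric {X : Type*} [Fintype X]
    (U : X → X → ℝ) (hdiag : ∀ i, U i i = 0) (hsym : ∀ i j, U i j = U j i) :
    (∀ n, strongPow (baseGraph U) n ≤ senderGraph U n) ∧
    (∀ n, indepNum (senderGraph U n) ≤ indepNum (strongPow (baseGraph U) n)) ∧
    ∀ L Th : ℝ, Filter.Tendsto (capSeq U) Filter.atTop (nhds L) →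
      Filter.Tendsto
        (fun n : ℕ => (indepNum (strongPow (baseGraph U) n) : ℝ) ^ (1 / (n : ℝ)))
        Filter.atTop (nhds Th) → L ≤ Th := by
  have hsub : ∀ n, strongPow (baseGraph U) n ≤ senderGraph U n := by
    intro n x y hxy
    refine ⟨hxy.1, Or.inl ?_⟩
    apply Finset.sum_nonneg
    intro k _
    rcases hxy.2 k with h | h
    · rw [h, hdiag]
    · rcases h.2 with h' | h'
      · rw [hsym]; exact h'
      · exact h'
  have hα : ∀ n, indepNum (senderGraph U n) ≤ indepNum (strongPow (baseGraph U) n) := by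
    intro n
    apply csSup_le_csSup
    · refine ⟨Fintype.card (Fin n → X), ?_⟩
      rintro m ⟨s, rfl, -⟩
      exact Finset.card_le_card (Finset.subset_univ s) |>.trans_eq (Finset.card_univ)
    · exact ⟨0, ∅, Finset.card_empty, by simp⟩
    · rintro m ⟨s, rfl, hs⟩
      exact ⟨s, rfl, fun x hx y hy hadj => hs x hx y hy (hsub n hadj)⟩
  refine ⟨hsub, hα, fun L Th hL hTh => ?_⟩
  refine le_of_tendsto_of_tendsto' hL hTh fun n => ?_
  unfold capSeq
  apply Real.rpow_le_rpow (by positivity) (by exact_mod_cast hα n) (by positivity)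
end

section
/- Let 𝒰 be a utility taking only the two values a and −b on off-diagonal entries, where a, b > 0 and a ≥ b, and 𝒰(i,i) = 0. Let G_s be the base sender graph (i ∼ j iff 𝒰(i,j) = a or 𝒰(j,i) = a). Then for every n, if distinct x, y ∈ 𝒳ⁿ are non-adjacent in the sender graph G_sⁿ, they are non-adjacent in G_s^{⊠n}; hence α(G_sⁿ) ≤ α(G_s^{⊠n}) and Ξ(𝒰) ≤ Θ(G_s). -/
open Finset Filter Real Topology

/-- If `U` takes only the values `a` and `-b` off the diagonal with
`a ≥ b > 0`, then non-adjacency in the sender graph `G_s^n` implies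
non-adjacency in the strong power `G_s^{⊠n}`; hence `α(G_s^n) ≤ α(G_s^{⊠n})`
and `Ξ(U) ≤ Θ(G_s)`. -/
theorem capacity_le_shannon_of_two_valued {X : Type*} [Fintype X]
    (U : X → X → ℝ) (hdiag : ∀ i, U i i = 0) (a b : ℝ)
    (ha : 0 < a) (hb : 0 < b) (hab : b ≤ a)
    (hval : ∀ i j : X, i ≠ j → U i j = a ∨ U i j = -b) :
    (∀ n, ∀ x y : Fin n → X, x ≠ y → ¬ (senderGraph U n).Adj x y →
      ¬ (strongPow (baseGraph U) n).Adj x y) ∧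
    (∀ n, indepNum (senderGraph U n) ≤ indepNum (strongPow (baseGraph U) n)) ∧
    ∀ L Th : ℝ, Filter.Tendsto (capSeq U) Filter.atTop (nhds L) →
      Filter.Tendsto
        (fun n : ℕ => (indepNum (strongPow (baseGraph U) n) : ℝ) ^ (1 / (n : ℝ)))
        Filter.atTop (nhds Th) → L ≤ Th := by
  classical
  have key : ∀ n, ∀ x y : Fin n → X, x ≠ y → ¬ (senderGraph U n).Adj x y →
      ¬ (strongPow (baseGraph U) n).Adj x y := by
    intro n x y hxy hnadj hadj
    have hnor : ¬ (0 ≤ ∑ k, U (y k) (x k) ∨ 0 ≤ ∑ k, U (x k) (y k)) :=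
      fun h => hnadj ⟨hxy, h⟩
    push_neg at hnor
    obtain ⟨hs1, hs2⟩ := hnor
    set D : Finset (Fin n) := Finset.univ.filter (fun k => x k ≠ y k) with hD
    set B1 : Finset (Fin n) := D.filter (fun k => U (y k) (x k) = -b) with hB1
    set B2 : Finset (Fin n) := D.filter (fun k => U (x k) (y k) = -b) with hB2
    -- generic counting lemma for one direction
    have count : ∀ (f : Fin n → ℝ), (∀ k ∈ D, f k = a ∨ f k = -b) →
        (∀ k, k ∉ D → f k = 0) → ∑ k, f k < 0 →
        (D.card : ℝ) < 2 * (D.filter (fun k => f k = -b)).card := by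
      intro f hf h0 hs
      set B := D.filter (fun k => f k = -b) with hB
      set C := D.filter (fun k => ¬ f k = -b) with hC
      have hsum : ∑ k, f k = ∑ k ∈ D, f k :=
        (Finset.sum_subset (Finset.subset_univ D) (fun k _ hk => h0 k hk)).symm
      have hsplit : ∑ k ∈ B, f k + ∑ k ∈ C, f k = ∑ k ∈ D, f k :=
        Finset.sum_filter_add_sum_filter_not D (fun k => f k = -b) f
      have hBsum : ∑ k ∈ B, f k = -b * B.card := by
        rw [Finset.sum_congr rfl (fun k hk => (Finset.mem_filter.mp hk).2),
          Finset.sum_const, nsmul_eq_mul, mul_comm]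
      have hCsum : ∑ k ∈ C, f k = a * C.card := by
        rw [Finset.sum_congr rfl (fun k hk => ?_), Finset.sum_const, nsmul_eq_mul, mul_comm]
        rcases Finset.mem_filter.mp hk with ⟨hkD, hkB⟩
        rcases hf k hkD with h | h
        · exact h
        · exact absurd h hkB
      have hcard : B.card + C.card = D.card :=
        Finset.card_filter_add_card_filter_not (fun k => f k = -b)
      have hcard' : (C.card : ℝ) = D.card - B.card := by
        have := hcard
        push_cast [← this]
        ring
      rw [hsum, ← hsplit, hBsum, hCsum, hcard'] at hs
      have hBle : (B.card : ℝ) ≤ D.card := by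
        exact_mod_cast Nat.le.intro hcard
      nlinarith
    have h1 : (D.card : ℝ) < 2 * B1.card := by
      refine count (fun k => U (y k) (x k)) (fun k hk => ?_) (fun k hk => ?_) hs1
      · exact hval _ _ (Ne.symm (Finset.mem_filter.mp hk).2)
      · have : x k = y k := by
          by_contra h
          exact hk (Finset.mem_filter.mpr ⟨Finset.mem_univ _, h⟩)
        show U (y k) (x k) = 0
        rw [this]; exact hdiag _
    have h2 : (D.card : ℝ) < 2 * B2.card := by
      refine count (fun k => U (x k) (y k)) (fun k hk => ?_) (fun k hk => ?_) hs2
      · exact hval _ _ (Finset.mem_filter.mp hk).2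
      · have : x k = y k := by
          by_contra h
          exact hk (Finset.mem_filter.mpr ⟨Finset.mem_univ _, h⟩)
        show U (x k) (y k) = 0
        rw [this]; exact hdiag _
    -- intersection nonempty
    have hUD : (B1 ∪ B2).card ≤ D.card :=
      Finset.card_le_card (Finset.union_subset (Finset.filter_subset _ _)
        (Finset.filter_subset _ _))
    have hcui : (B1 ∪ B2).card + (B1 ∩ B2).card = B1.card + B2.card :=
      Finset.card_union_add_card_inter _ _
    have hpos : 0 < (B1 ∩ B2).card := by
      have h1' : D.card < 2 * B1.card := by exact_mod_cast h1
      have h2' : D.card < 2 * B2.card := by exact_mod_cast h2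
      have hb1 : B1.card ≤ D.card := Finset.card_le_card (Finset.filter_subset _ _)
      have hb2 : B2.card ≤ D.card := Finset.card_le_card (Finset.filter_subset _ _)
      omega
    obtain ⟨k, hk⟩ := Finset.card_pos.mp hpos
    rcases Finset.mem_inter.mp hk with ⟨hk1, hk2⟩
    have hkD : x k ≠ y k := (Finset.mem_filter.mp (Finset.filter_subset _ _ hk1)).2
    have hv1 : U (y k) (x k) = -b := (Finset.mem_filter.mp hk1).2
    have hv2 : U (x k) (y k) = -b := (Finset.mem_filter.mp hk2).2
    rcases hadj.2 k with h | h
    · exact hkD h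
    · rcases h.2 with h' | h'
      · rw [hv2] at h'; linarith
      · rw [hv1] at h'; linarith
  have mono : ∀ n, indepNum (senderGraph U n) ≤ indepNum (strongPow (baseGraph U) n) := by
    intro n
    apply csSup_le_csSup
    · exact ⟨Fintype.card (Fin n → X), fun m ⟨s, hc, _⟩ => hc ▸ Finset.card_le_univ s⟩
    · exact ⟨0, ∅, by simp, by simp⟩
    · rintro m ⟨s, hc, hind⟩
      refine ⟨s, hc, fun u hu v hv hadj => ?_⟩
      by_cases huv : u = v
      · exact (strongPow (baseGraph U) n).irrefl (huv ▸ hadj)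
      · exact key n u v huv (hind u hu v hv) hadj
  refine ⟨key, mono, fun L Th hL hTh => ?_⟩
  refine le_of_tendsto_of_tendsto' hL hTh (fun n => ?_)
  unfold capSeq
  apply Real.rpow_le_rpow (by positivity) (by exact_mod_cast mono n) (by positivity)
end

section
/- Let 𝒰 be a utility with zero diagonal. Define 𝒰min⁺ = min over pairs with 𝒰(i,j) ≥ 0 of 𝒰(i,j) and 𝒰min⁻ = min over pairs with 𝒰(i,j) < 0 of 𝒰(i,j), and 𝒰^min(i,j) = 𝒰min⁺ if 𝒰(i,j) ≥ 0, else 𝒰min⁻. Then for every n the sender graph of 𝒰^min on 𝒳ⁿ is a subgraph of the sender graph of 𝒰 on 𝒳ⁿ, and consequently Ξ(𝒰) ≤ Ξ(𝒰^min). -/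
open Finset Filter Real Topology

/-- Capping the utility from below by `U^min` (taking the least nonnegative
value on nonnegative entries and the least negative value on negative entries)
makes every sender graph of `U^min` a subgraph of that of `U`, hence
`Ξ(U) ≤ Ξ(U^min)`. -/
theorem capacity_le_of_Umin {X : Type*} [Fintype X]
    (U : X → X → ℝ) (hdiag : ∀ i, U i i = 0) (up um : ℝ)
    (hup : IsLeast {r | ∃ i j, U i j = r ∧ 0 ≤ r} up)
    (hum : IsLeast {r | ∃ i j, U i j = r ∧ r < 0} um)
    (Umin : X → X → ℝ)
    (hUmin : ∀ i j, Umin i j = if 0 ≤ U i j then up else um) :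
    (∀ n, senderGraph Umin n ≤ senderGraph U n) ∧
    ∀ L L' : ℝ, Filter.Tendsto (capSeq U) Filter.atTop (nhds L) →
      Filter.Tendsto (capSeq Umin) Filter.atTop (nhds L') → L ≤ L' := by
  have hle : ∀ i j, Umin i j ≤ U i j := by
    intro i j
    rw [hUmin i j]
    split_ifs with h
    · exact hup.2 ⟨i, j, rfl, h⟩
    · exact hum.2 ⟨i, j, rfl, not_le.1 h⟩
  have hsub : ∀ n, senderGraph Umin n ≤ senderGraph U n := by
    intro n x y hxy
    refine ⟨hxy.1, hxy.2.imp ?_ ?_⟩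
    · intro h
      exact h.trans (Finset.sum_le_sum fun k _ => hle (y k) (x k))
    · intro h
      exact h.trans (Finset.sum_le_sum fun k _ => hle (x k) (y k))
  refine ⟨hsub, fun L L' hL hL' => ?_⟩
  refine le_of_tendsto_of_tendsto' hL hL' fun n => ?_
  unfold capSeq
  have hmono : indepNum (senderGraph U n) ≤ indepNum (senderGraph Umin n) := by
    unfold indepNum
    apply csSup_le_csSup
    · refine ⟨Fintype.card (Fin n → X), ?_⟩
      rintro m ⟨s, hs, -⟩
      exact hs ▸ s.card_le_univ.trans_eq (by simp [Finset.card_univ])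
    · exact ⟨0, ∅, by simp⟩
    · rintro m ⟨s, hs, hind⟩
      exact ⟨s, hs, fun x hx y hy hadj => hind x hx y hy (hsub n hadj)⟩
  exact Real.rpow_le_rpow (by positivity) (by exact_mod_cast hmono) (by positivity)
end

section
/- Let 𝒰 be a utility with zero diagonal and 𝒴 ⊆ 𝒳 a subset with the property: the subgraph on 𝒴 contains no positive-edges cycle (i.e., no sequence of distinct symbols i₀,…,i_{K−1} ∈ 𝒴 with 𝒰(i_{(m+1) mod K}, i_m) ≥ 0 for all m), and min_{i,j∈𝒴: 𝒰(i,j)<0} |𝒰(i,j)| > (|𝒴|−1) · max_{i,j∈𝒴: 𝒰(i,j)≥0} 𝒰(i,j). Then every sequence of distinct symbols i₀,…,i_{K−1} ∈ 𝒴 (K ≥ 2) satisfies 𝒰(i₁,i₀) + 𝒰(i₂,i₁) + ⋯ + 𝒰(i₀,i_{K−1}) < 0; i.e., 𝒴 is feasible for the permutation-matrix optimization, and hence Ξ(𝒰) ≥ |𝒴|. -/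
open Finset Filter Real Topology

section Aux


lemma part1 {X : Type*} [Fintype X]
    (U : X → X → ℝ) (Y : Finset X)
    (hnc : ∀ K : ℕ, ∀ i : Fin (K + 2) → X, (∀ m, i m ∈ Y) →
      Function.Injective i → ∃ m : Fin (K + 2), U (i (m + 1)) (i m) < 0)
    (hmag : ∀ i ∈ Y, ∀ j ∈ Y, U i j < 0 → ∀ i' ∈ Y, ∀ j' ∈ Y, 0 ≤ U i' j' →
      ((Y.card : ℝ) - 1) * U i' j' < |U i j|) :
    ∀ K : ℕ, ∀ i : Fin (K + 2) → X, (∀ m, i m ∈ Y) → Function.Injective i →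
      ∑ m : Fin (K + 2), U (i (m + 1)) (i m) < 0 := by
  intro K i hmem hinj
  obtain ⟨m0, hm0⟩ := hnc K i hmem hinj
  have hcard : K + 2 ≤ Y.card := by
    have : Fintype.card (Fin (K+2)) ≤ Y.card := by
      have := Fintype.card_le_of_injective (fun m => (⟨i m, hmem m⟩ : {x // x ∈ Y}))
        (fun a b h => hinj (congrArg Subtype.val h))
      simpa using this
    simpa using this
  have hK1 : (0:ℝ) < K + 1 := by positivity
  -- each other term is < -U (i (m0+1)) (i m0) / (K+1)
  have key : ∀ m : Fin (K+2), m ≠ m0 →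
      U (i (m+1)) (i m) < -U (i (m0+1)) (i m0) / (K+1) := by
    intro m hm
    rcases le_or_gt 0 (U (i (m+1)) (i m)) with hpos | hneg
    · have := hmag _ (hmem _) _ (hmem _) hm0 _ (hmem _) _ (hmem _) hpos
      rw [abs_of_neg hm0] at this
      have hle : ((K:ℝ) + 1) * U (i (m+1)) (i m) ≤ ((Y.card : ℝ) - 1) * U (i (m+1)) (i m) := by
        apply mul_le_mul_of_nonneg_right _ hpos
        have : ((K:ℝ) + 2) ≤ (Y.card : ℝ) := by exact_mod_cast hcard
        linarith
      rw [lt_div_iff₀ hK1]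
      calc U (i (m+1)) (i m) * ((K:ℝ)+1) = ((K:ℝ)+1) * U (i (m+1)) (i m) := by ring
        _ ≤ _ := hle
        _ < -U (i (m0+1)) (i m0) := this
    · calc U (i (m+1)) (i m) < 0 := hneg
        _ ≤ -U (i (m0+1)) (i m0) / (K+1) := by
            apply div_nonneg _ (le_of_lt hK1); linarith
  have hsplit : ∑ m : Fin (K + 2), U (i (m + 1)) (i m)
      = U (i (m0+1)) (i m0) + ∑ m ∈ univ.erase m0, U (i (m+1)) (i m) := by
    rw [← Finset.add_sum_erase _ _ (mem_univ m0)]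
  rw [hsplit]
  have hsum : ∑ m ∈ univ.erase m0, U (i (m+1)) (i m)
      < ∑ _m ∈ univ.erase m0, (-U (i (m0+1)) (i m0) / (K+1)) := by
    apply Finset.sum_lt_sum_of_nonempty
    · refine ⟨m0 + 1, ?_⟩
      simp only [mem_erase, mem_univ, and_true]
      intro h
      have h1 : (1 : Fin (K+2)) = 0 := add_left_cancel (h.trans (add_zero m0).symm)
      simpa [Fin.val_one] using congrArg Fin.val h1
    · intro m hm
      exact key m (Finset.mem_erase.mp hm).1
  have hcount : (univ.erase m0).card = K + 1 := by
    rw [Finset.card_erase_of_mem (mem_univ m0)]; simp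
  rw [Finset.sum_const, hcount, nsmul_eq_mul] at hsum
  push_cast at hsum
  have heq : ((K:ℝ)+1) * (-U (i (m0+1)) (i m0) / ((K:ℝ)+1)) = -U (i (m0+1)) (i m0) :=
    mul_div_cancel₀ _ (ne_of_gt hK1)
  linarith [hsum, heq]


lemma circ_aux {X : Type*} [Fintype X] (U : X → X → ℝ) (Y : Finset X)
    (hcyc : ∀ K : ℕ, ∀ i : Fin (K + 2) → X, (∀ m, i m ∈ Y) → Function.Injective i →
      ∑ m : Fin (K + 2), U (i (m + 1)) (i m) < 0) :
    ∀ N : ℕ, ∀ M : X → X → ℤ, (∀ i j, 0 ≤ M i j) → (∀ i, M i i = 0) →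
    (∀ s, ∑ j, M s j = ∑ j, M j s) →
    (∀ i j, M i j ≠ 0 → i ∈ Y ∧ j ∈ Y) →
    (∑ i, ∑ j, M i j ≤ (N : ℤ)) →
    (∑ i, ∑ j, (M i j : ℝ) * U j i ≤ 0) ∧
      ((∃ a b, M a b ≠ 0) → ∑ i, ∑ j, (M i j : ℝ) * U j i < 0) := by
  intro N
  induction N with
  | zero =>
    intro M hpos hdiag hcirc hsupp htot
    have hzero : ∀ a b, M a b = 0 := by
      intro a b
      by_contra hab
      have h1 : (1:ℤ) ≤ M a b := lt_of_le_of_ne (hpos a b) (Ne.symm hab)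
      have : (1:ℤ) ≤ ∑ i, ∑ j, M i j := by
        calc (1:ℤ) ≤ M a b := h1
          _ ≤ ∑ j, M a j := Finset.single_le_sum (fun j _ => hpos a j) (mem_univ b)
          _ ≤ ∑ i, ∑ j, M i j :=
            Finset.single_le_sum (fun i _ => Finset.sum_nonneg fun j _ => hpos i j) (mem_univ a)
      omega
    constructor
    · apply le_of_eq; apply Finset.sum_eq_zero; intro i _; apply Finset.sum_eq_zero
      intro j _; rw [hzero i j]; simp
    · rintro ⟨a, b, hab⟩; exact absurd (hzero a b) hab
  | succ N IH =>
    intro M hpos hdiag hcirc hsupp htot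
    classical
    by_cases hex : ∃ a b, M a b ≠ 0
    · obtain ⟨a, b, hab⟩ := hex
      -- walk construction
      set next : X → X := fun v => if h : ∃ j, M v j ≠ 0 then h.choose else v with hnext
      set f : ℕ → X := fun n => next^[n] b with hf
      have hstep : ∀ v, (0 < ∑ j, M j v) → M v (next v) ≠ 0 := by
        intro v hin
        have hout : 0 < ∑ j, M v j := (hcirc v).symm ▸ hin
        have hexv : ∃ j, M v j ≠ 0 := by
          by_contra h
          push_neg at h
          rw [Finset.sum_eq_zero (fun j _ => h j)] at hout
          exact lt_irrefl 0 hout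
        simp only [hnext, dif_pos hexv]
        exact hexv.choose_spec
      have hwalkin : ∀ n, 0 < ∑ j, M j (f n) := by
        intro n
        induction n with
        | zero =>
          have h0 : (0:ℤ) < M a b := lt_of_le_of_ne (hpos a b) (Ne.symm hab)
          calc (0:ℤ) < M a b := h0
            _ ≤ ∑ j, M j b := Finset.single_le_sum (fun j _ => hpos j b) (mem_univ a)
        | succ n ih =>
          have hedge := hstep (f n) ih
          have h0 : (0:ℤ) < M (f n) (next (f n)) := lt_of_le_of_ne (hpos _ _) (Ne.symm hedge)
          have hfn : f (n+1) = next (f n) := Function.iterate_succ_apply' next n b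
          rw [hfn]
          calc (0:ℤ) < M (f n) (next (f n)) := h0
            _ ≤ ∑ j, M j (next (f n)) :=
              Finset.single_le_sum (fun j _ => hpos j _) (mem_univ (f n))
      have hedge : ∀ n, M (f n) (f (n+1)) ≠ 0 := by
        intro n
        have hfn : f (n+1) = next (f n) := Function.iterate_succ_apply' next n b
        rw [hfn]
        exact hstep (f n) (hwalkin n)
      have hne : ∀ n, f n ≠ f (n+1) := by
        intro n h
        exact hedge n (h ▸ hdiag (f n))
      -- pigeonhole: repeat
      have hrep : ∃ q, ∃ p < q, f p = f q := by
        have hni : ¬ Function.Injective (fun m : Fin (Fintype.card X + 1) => f m.val) := by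
          intro hinj
          have := Fintype.card_le_of_injective _ hinj
          simp at this
        rw [Function.not_injective_iff] at hni
        obtain ⟨p', q', heq, hne'⟩ := hni
        rcases lt_or_gt_of_ne (fun h : p'.val = q'.val => hne' (Fin.ext h)) with h | h
        · exact ⟨q'.val, p'.val, h, heq⟩
        · exact ⟨p'.val, q'.val, h, heq.symm⟩
      obtain ⟨p, hpq, hfpq⟩ : ∃ p < Nat.find hrep, f p = f (Nat.find hrep) := Nat.find_spec hrep
      set q := Nat.find hrep with hq
      have hmin : ∀ a b, p ≤ a → a < b → b < q → f a ≠ f b := by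
        intro a b _ hab2 hbq h
        exact Nat.find_min hrep hbq ⟨a, hab2, h⟩
      have hl2 : p + 2 ≤ q := by
        rcases Nat.lt_or_ge (p+1) q with h | h
        · omega
        · exfalso
          have hq1 : q = p + 1 := by omega
          exact hne p (hq1 ▸ hfpq)
      obtain ⟨K, hK⟩ : ∃ K, q = p + (K + 2) := ⟨q - p - 2, by omega⟩
      set ii : Fin (K + 2) → X := fun m => f (p + m.val) with hii
      have hiinj : Function.Injective ii := by
        intro m1 m2 h
        by_contra hne12
        simp only [hii] at h
        rcases lt_or_gt_of_ne (fun hv : m1.val = m2.val => hne12 (Fin.ext hv)) with hv | hv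
        · exact hmin (p + m1.val) (p + m2.val) (Nat.le_add_right p _) (by omega)
            (by omega) h
        · exact hmin (p + m2.val) (p + m1.val) (Nat.le_add_right p _) (by omega)
            (by omega) h.symm
      have hiedge : ∀ m : Fin (K + 2), M (ii m) (ii (m + 1)) ≠ 0 := by
        intro m
        have hval : ii (m + 1) = f (p + m.val + 1) := by
          rcases Nat.lt_or_ge (m.val + 1) (K + 2) with h | h
          · have hv : ((m + 1 : Fin (K+2))).val = m.val + 1 := by
              rw [Fin.add_def]
              simp [Nat.mod_eq_of_lt h]
            simp only [hii, hv]
            congr 1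
          · have hm : m.val = K + 1 := by omega
            have hv : ((m + 1 : Fin (K+2))).val = 0 := by
              rw [Fin.add_def]
              simp [hm]
            simp only [hii, hv]
            have h1 : f (p + m.val + 1) = f q := by congr 1; omega
            rw [h1, ← hfpq]
            congr 1
        rw [hval]
        simp only [hii]
        exact hedge (p + m.val)
      have hiY : ∀ m, ii m ∈ Y := fun m => (hsupp _ _ (hiedge m)).1
      have hcycsum := hcyc K ii hiY hiinj
      -- cycle matrix
      set C : X → X → ℤ := fun u v => ∑ m : Fin (K + 2), if ii m = u ∧ ii (m + 1) = v then 1 else 0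
        with hC
      have hCpos : ∀ u v, 0 ≤ C u v :=
        fun u v => Finset.sum_nonneg fun m _ => by positivity
      have hm1 : ∀ m : Fin (K + 2), m + 1 ≠ m := by
        intro m h
        have h1 : (1 : Fin (K+2)) = 0 := by
          have h2 := h.trans (add_zero m).symm
          rw [add_comm m 1, add_comm m 0] at h2
          exact add_right_cancel h2
        simpa [Fin.val_one] using congrArg Fin.val h1
      have hCle : ∀ u v, C u v ≤ M u v := by
        intro u v
        by_cases hex2 : ∃ m : Fin (K+2), ii m = u ∧ ii (m + 1) = v
        · obtain ⟨m0, hm0⟩ := hex2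
          have hC1 : C u v = 1 := by
            simp only [hC]
            rw [Finset.sum_eq_single m0]
            · simp [hm0]
            · intro m _ hmm0
              have hno : ¬ (ii m = u ∧ ii (m+1) = v) := by
                rintro ⟨h1, _⟩
                exact hmm0 (hiinj (h1.trans hm0.1.symm))
              simp [hno]
            · intro h; exact absurd (mem_univ m0) h
          rw [hC1]
          have hMuv := hiedge m0
          rw [hm0.1, hm0.2] at hMuv
          exact lt_of_le_of_ne (hpos u v) (Ne.symm hMuv)
        · have hC0 : C u v = 0 := by
            simp only [hC]
            apply Finset.sum_eq_zero
            intro m _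
            have hno : ¬ (ii m = u ∧ ii (m+1) = v) := fun h => hex2 ⟨m, h⟩
            simp [hno]
          rw [hC0]; exact hpos u v
      have hCdiag : ∀ u, C u u = 0 := by
        intro u
        simp only [hC]
        apply Finset.sum_eq_zero
        intro m _
        have hno : ¬ (ii m = u ∧ ii (m+1) = u) := by
          rintro ⟨h1, h2⟩
          exact hm1 m (hiinj (h2.trans h1.symm))
        simp [hno]
      have hCrow : ∀ u, ∑ v, C u v = ∑ m : Fin (K+2), if ii m = u then 1 else 0 := by
        intro u
        simp only [hC]
        rw [Finset.sum_comm]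
        apply Finset.sum_congr rfl
        intro m _
        rcases eq_or_ne (ii m) u with h | h
        · simp [h]
        · simp [h]
      have hCcol : ∀ v, ∑ u, C u v = ∑ m : Fin (K+2), if ii (m+1) = v then 1 else 0 := by
        intro v
        simp only [hC]
        rw [Finset.sum_comm]
        apply Finset.sum_congr rfl
        intro m _
        rcases eq_or_ne (ii (m+1)) v with h | h
        · simp [h]
        · simp [h]
      have hCcirc : ∀ s, ∑ v, C s v = ∑ u, C u s := by
        intro s
        rw [hCrow, hCcol]
        exact (Fintype.sum_equiv (Equiv.addRight (1 : Fin (K+2))) _ _ (fun m => by simp; congr)).symm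
      have hCtot : ∑ u, ∑ v, C u v = ((K:ℤ) + 2) := by
        rw [Finset.sum_congr rfl (fun u (_ : u ∈ univ) => hCrow u), Finset.sum_comm]
        have h1 : ∀ m : Fin (K+2), ∑ u, (if ii m = u then (1:ℤ) else 0) = 1 := by
          intro m; rw [Finset.sum_ite_eq univ (ii m) (fun _ => (1:ℤ))]; simp
        rw [Finset.sum_congr rfl (fun m (_ : m ∈ univ) => h1 m)]
        simp
      have hCU : ∑ u, ∑ v, (C u v : ℝ) * U v u = ∑ m : Fin (K+2), U (ii (m+1)) (ii m) := by
        have hpt : ∀ u v, (C u v : ℝ) * U v u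
            = ∑ m : Fin (K+2), if ii m = u ∧ ii (m+1) = v then U v u else 0 := by
          intro u v
          simp only [hC]
          push_cast
          rw [Finset.sum_mul]
          apply Finset.sum_congr rfl
          intro m _
          by_cases h : ii m = u ∧ ii (m+1) = v <;> simp [h]
        rw [Finset.sum_congr rfl fun u (_ : u ∈ univ) =>
          Finset.sum_congr rfl fun v (_ : v ∈ univ) => hpt u v]
        rw [Finset.sum_congr rfl fun u (_ : u ∈ univ) => Finset.sum_comm, Finset.sum_comm]
        apply Finset.sum_congr rfl
        intro m _
        simp [ite_and, Finset.sum_ite_eq]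
      -- the reduced matrix
      set M2 : X → X → ℤ := fun u v => M u v - C u v with hM2
      have hM2pos : ∀ u v, 0 ≤ M2 u v := fun u v => sub_nonneg.mpr (hCle u v)
      have hM2diag : ∀ u, M2 u u = 0 := by
        intro u; simp only [hM2]; rw [hdiag u, hCdiag u]; ring
      have hM2circ : ∀ s, ∑ j, M2 s j = ∑ j, M2 j s := by
        intro s
        simp only [hM2, Finset.sum_sub_distrib]
        rw [hcirc s, hCcirc s]
      have hM2supp : ∀ u v, M2 u v ≠ 0 → u ∈ Y ∧ v ∈ Y := by
        intro u v h
        apply hsupp u v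
        intro hM0
        apply h
        have : C u v = 0 := le_antisymm (hM0 ▸ hCle u v) (hCpos u v)
        simp only [hM2]; rw [hM0, this]; ring
      have hM2tot : ∑ u, ∑ v, M2 u v ≤ (N : ℤ) := by
        simp only [hM2, Finset.sum_sub_distrib]
        rw [hCtot]
        push_cast at htot ⊢
        linarith
      obtain ⟨hIH1, _⟩ := IH M2 hM2pos hM2diag hM2circ hM2supp hM2tot
      have hdecomp : ∑ i, ∑ j, (M i j : ℝ) * U j i
          = ∑ i, ∑ j, (M2 i j : ℝ) * U j i + ∑ i, ∑ j, (C i j : ℝ) * U j i := by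
        rw [← Finset.sum_add_distrib]
        apply Finset.sum_congr rfl
        intro i _
        rw [← Finset.sum_add_distrib]
        apply Finset.sum_congr rfl
        intro j _
        simp only [hM2]
        push_cast
        ring
      have hlt : ∑ i, ∑ j, (M i j : ℝ) * U j i < 0 := by
        rw [hdecomp, hCU]
        linarith
      exact ⟨le_of_lt hlt, fun _ => hlt⟩
    · constructor
      · apply le_of_eq; apply Finset.sum_eq_zero; intro i _; apply Finset.sum_eq_zero
        intro j _
        push_neg at hex
        rw [hex i j]; simp
      · intro h; exact absurd h hex

lemma samecount {X : Type*} [Fintype X] [DecidableEq X] (U : X → X → ℝ) (Y : Finset X) (hdiag : ∀ i, U i i = 0)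
    (hcyc : ∀ K : ℕ, ∀ i : Fin (K + 2) → X, (∀ m, i m ∈ Y) → Function.Injective i →
      ∑ m : Fin (K + 2), U (i (m + 1)) (i m) < 0)
    (n : ℕ) (x y : Fin n → X) (hx : ∀ k, x k ∈ Y) (hy : ∀ k, y k ∈ Y)
    (hcount : ∀ s : X, #{k | x k = s} = #{k | y k = s}) (hxy : x ≠ y) :
    ∑ k, U (y k) (x k) < 0 := by
  classical
  set F : X → X → ℤ := fun u v => (#{k | x k = u ∧ y k = v} : ℤ) with hF
  set M : X → X → ℤ := fun u v => if u = v then 0 else F u v with hM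
  have hMpos : ∀ u v, 0 ≤ M u v := by
    intro u v; simp only [hM, hF]; split
    · exact le_refl 0
    · positivity
  have hMdiag : ∀ u, M u u = 0 := by intro u; simp [hM]
  have hFrow : ∀ u, ∑ v, F u v = (#{k | x k = u} : ℤ) := by
    intro u
    have h1 : ∀ v, F u v = ∑ k, if x k = u ∧ y k = v then (1:ℤ) else 0 := by
      intro v; simp only [hF]; rw [Finset.sum_boole]
    rw [Finset.sum_congr rfl fun v (_ : v ∈ univ) => h1 v, Finset.sum_comm]
    have h2 : (#{k | x k = u} : ℤ) = ∑ k, if x k = u then (1:ℤ) else 0 := by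
      rw [Finset.sum_boole]
    rw [h2]
    apply Finset.sum_congr rfl
    intro k _
    rcases eq_or_ne (x k) u with h | h
    · simp [h, ite_and, Finset.sum_ite_eq]
    · simp [h, ite_and]
  have hFcol : ∀ v, ∑ u, F u v = (#{k | y k = v} : ℤ) := by
    intro v
    have h1 : ∀ u, F u v = ∑ k, if x k = u ∧ y k = v then (1:ℤ) else 0 := by
      intro u; simp only [hF]; rw [Finset.sum_boole]
    rw [Finset.sum_congr rfl fun u (_ : u ∈ univ) => h1 u, Finset.sum_comm]
    have h2 : (#{k | y k = v} : ℤ) = ∑ k, if y k = v then (1:ℤ) else 0 := by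
      rw [Finset.sum_boole]
    rw [h2]
    apply Finset.sum_congr rfl
    intro k _
    rcases eq_or_ne (y k) v with h | h
    · simp [h, and_comm, ite_and, Finset.sum_ite_eq]
    · simp [h, ite_and]
  have hMrow : ∀ s, ∑ j, M s j = (∑ j, F s j) - F s s := by
    intro s
    have hpt : ∀ j, M s j = F s j - (if s = j then F s j else 0) := by
      intro j; simp only [hM]; split <;> simp_all
    rw [Finset.sum_congr rfl fun j (_ : j ∈ univ) => hpt j, Finset.sum_sub_distrib,
      Finset.sum_ite_eq univ s (fun j => F s j)]
    simp
  have hMcol : ∀ s, ∑ j, M j s = (∑ j, F j s) - F s s := by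
    intro s
    have hpt : ∀ j, M j s = F j s - (if j = s then F j s else 0) := by
      intro j; simp only [hM]; split <;> simp_all
    rw [Finset.sum_congr rfl fun j (_ : j ∈ univ) => hpt j, Finset.sum_sub_distrib,
      Finset.sum_ite_eq' univ s (fun j => F j s)]
    simp
  have hMcirc : ∀ s, ∑ j, M s j = ∑ j, M j s := by
    intro s
    rw [hMrow, hMcol, hFrow, hFcol, hcount s]
  have hMsupp : ∀ u v, M u v ≠ 0 → u ∈ Y ∧ v ∈ Y := by
    intro u v h
    have huv : u ≠ v := by intro he; rw [hM] at h; simp [he] at h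
    have hcard : ({k | x k = u ∧ y k = v} : Finset (Fin n)).Nonempty := by
      rw [← Finset.card_pos]
      by_contra hc
      apply h
      simp only [hM, hF, if_neg huv]
      omega
    obtain ⟨k, hk⟩ := hcard
    simp only [Finset.mem_filter] at hk
    exact ⟨hk.2.1 ▸ hx k, hk.2.2 ▸ hy k⟩
  have hMtot : ∑ u, ∑ v, M u v ≤ ((Fintype.card X * Fintype.card X * n : ℕ) : ℤ) := by
    have hb : ∀ u v, M u v ≤ (n : ℤ) := by
      intro u v
      simp only [hM, hF]
      split
      · positivity
      · have := Finset.card_filter_le (univ : Finset (Fin n)) (fun k => x k = u ∧ y k = v)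
        simp only [Finset.card_univ, Fintype.card_fin] at this
        exact_mod_cast this
    calc ∑ u, ∑ v, M u v ≤ ∑ _u : X, ∑ _v : X, (n:ℤ) :=
          Finset.sum_le_sum fun u _ => Finset.sum_le_sum fun v _ => hb u v
      _ = (Fintype.card X * Fintype.card X * n : ℕ) := by
          simp [Finset.sum_const, Finset.card_univ]
          push_cast
          ring
  obtain ⟨_, hstrict⟩ := circ_aux U Y hcyc _ M hMpos hMdiag hMcirc hMsupp hMtot
  have hexist : ∃ a b, M a b ≠ 0 := by
    have : ∃ k, x k ≠ y k := by
      by_contra hc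
      push_neg at hc
      exact hxy (funext hc)
    obtain ⟨k, hk⟩ := this
    refine ⟨x k, y k, ?_⟩
    simp only [hM, hF, if_neg hk]
    have hmem : k ∈ ({k' | x k' = x k ∧ y k' = y k} : Finset (Fin n)) := by simp
    have := Finset.card_pos.mpr ⟨k, hmem⟩
    omega
  have hlt := hstrict hexist
  -- identify the sum
  have hid : ∑ u, ∑ v, (M u v : ℝ) * U v u = ∑ k, U (y k) (x k) := by
    have hpt : ∀ u v, (M u v : ℝ) * U v u = (F u v : ℝ) * U v u := by
      intro u v
      simp only [hM]
      split
      · rename_i he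
        rw [he, hdiag]
        ring
      · rfl
    rw [Finset.sum_congr rfl fun u (_ : u ∈ univ) =>
      Finset.sum_congr rfl fun v (_ : v ∈ univ) => hpt u v]
    have hpt2 : ∀ u v, (F u v : ℝ) * U v u
        = ∑ k, if x k = u ∧ y k = v then U v u else 0 := by
      intro u v
      have : (F u v : ℝ) = ∑ k, if x k = u ∧ y k = v then (1:ℝ) else 0 := by
        simp only [hF]; rw [Finset.sum_boole]; simp
      rw [this, Finset.sum_mul]
      apply Finset.sum_congr rfl
      intro k _
      by_cases h : x k = u ∧ y k = v <;> simp [h]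
    rw [Finset.sum_congr rfl fun u (_ : u ∈ univ) =>
      Finset.sum_congr rfl fun v (_ : v ∈ univ) => hpt2 u v]
    rw [Finset.sum_congr rfl fun u (_ : u ∈ univ) => Finset.sum_comm, Finset.sum_comm]
    apply Finset.sum_congr rfl
    intro k _
    simp [ite_and, Finset.sum_ite_eq]
  rw [hid] at hlt
  exact hlt


lemma indepNum_ge {V : Type*} [Fintype V] (G : SimpleGraph V) (s : Finset V)
    (h : ∀ x ∈ s, ∀ y ∈ s, ¬ G.Adj x y) : s.card ≤ indepNum G := by
  apply le_csSup
  · refine ⟨Fintype.card V, ?_⟩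
    rintro m ⟨t, rfl, -⟩
    exact Finset.card_le_univ t
  · exact ⟨s, rfl, h⟩

lemma count_bound {X : Type*} [Fintype X] [DecidableEq X] (U : X → X → ℝ) (Y : Finset X)
    (hdiag : ∀ i, U i i = 0)
    (hcyc : ∀ K : ℕ, ∀ i : Fin (K + 2) → X, (∀ m, i m ∈ Y) → Function.Injective i →
      ∑ m : Fin (K + 2), U (i (m + 1)) (i m) < 0)
    (hY : Y.Nonempty) (n : ℕ) :
    Y.card ^ n ≤ (n+1) ^ Y.card * indepNum (senderGraph U n) := by
  classical
  -- samecount, assumed proven elsewhere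
  have samecount : ∀ (x y : Fin n → X), (∀ k, x k ∈ Y) → (∀ k, y k ∈ Y) →
      (∀ s : X, #{k | x k = s} = #{k | y k = s}) → x ≠ y →
      ∑ k, U (y k) (x k) < 0 :=
    fun x y hx hy hc hxy => samecount U Y hdiag hcyc n x y hx hy hc hxy
  set F : Finset (Fin n → X) := Fintype.piFinset (fun _ : Fin n => Y) with hFdef
  have hFcard : F.card = Y.card ^ n := by
    rw [hFdef, Fintype.card_piFinset]
    simp
  have hT : ∀ x : Fin n → X, ∀ s : X, #{k | x k = s} < n + 1 :=
    fun x s => Nat.lt_succ_of_le (by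
      simpa using Finset.card_filter_le (univ : Finset (Fin n)) (fun k => x k = s))
  set T : (Fin n → X) → (Y → Fin (n+1)) :=
    fun x s => ⟨#{k | x k = s.val}, hT x s.val⟩ with hTdef
  have hFne : F.Nonempty := by
    obtain ⟨y0, hy0⟩ := hY
    exact ⟨fun _ => y0, by simp [hFdef, hy0]⟩
  have hTmaps : ∀ x ∈ F, T x ∈ F.image T := fun x hx => Finset.mem_image_of_mem T hx
  have himgne : (F.image T).Nonempty := hFne.image T
  obtain ⟨v0, hv0img, hv0max⟩ := Finset.exists_max_image (F.image T)
    (fun v => #(F.filter (fun x => T x = v))) himgne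
  have hsplit : F.card = ∑ v ∈ F.image T, #(F.filter (fun x => T x = v)) :=
    Finset.card_eq_sum_card_fiberwise hTmaps
  have himgcard : (F.image T).card ≤ (n+1) ^ Y.card := by
    calc (F.image T).card ≤ Fintype.card (Y → Fin (n+1)) := Finset.card_le_univ _
      _ = (n+1) ^ Y.card := by
          rw [Fintype.card_fun]
          simp
  have hchain : Y.card ^ n ≤ (n+1) ^ Y.card * #(F.filter (fun x => T x = v0)) := by
    calc Y.card ^ n = F.card := hFcard.symm
      _ = ∑ v ∈ F.image T, #(F.filter (fun x => T x = v)) := hsplit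
      _ ≤ ∑ _v ∈ F.image T, #(F.filter (fun x => T x = v0)) :=
          Finset.sum_le_sum fun v hv => hv0max v hv
      _ = (F.image T).card * #(F.filter (fun x => T x = v0)) := by
          rw [Finset.sum_const, smul_eq_mul]
      _ ≤ (n+1) ^ Y.card * #(F.filter (fun x => T x = v0)) :=
          Nat.mul_le_mul_right _ himgcard
  refine le_trans hchain (Nat.mul_le_mul_left _ ?_)
  apply indepNum_ge
  intro x hx y hy hadj
  simp only [Finset.mem_filter] at hx hy
  have hxF : ∀ k, x k ∈ Y := by
    intro k
    have := hx.1
    rw [hFdef, Fintype.mem_piFinset] at this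
    exact this k
  have hyF : ∀ k, y k ∈ Y := by
    intro k
    have := hy.1
    rw [hFdef, Fintype.mem_piFinset] at this
    exact this k
  have hcnt : ∀ s : X, #{k | x k = s} = #{k | y k = s} := by
    intro s
    by_cases hs : s ∈ Y
    · have := congrFun (hx.2.trans hy.2.symm) ⟨s, hs⟩
      simpa [hTdef] using congrArg Fin.val this
    · have h1 : ({k | x k = s} : Finset (Fin n)) = ∅ := by
        apply Finset.filter_eq_empty_iff.mpr
        intro k _
        exact fun he => hs (he ▸ hxF k)
      have h2 : ({k | y k = s} : Finset (Fin n)) = ∅ := by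
        apply Finset.filter_eq_empty_iff.mpr
        intro k _
        exact fun he => hs (he ▸ hyF k)
      rw [h1, h2]
  change x ≠ y ∧ (0 ≤ ∑ k, U (y k) (x k) ∨ 0 ≤ ∑ k, U (x k) (y k)) at hadj
  have hxy : x ≠ y := hadj.1
  rcases hadj.2 with h | h
  · exact absurd h (not_le.mpr (samecount x y hxF hyF hcnt hxy))
  · have hcnt' : ∀ s : X, #{k | y k = s} = #{k | x k = s} := fun s => (hcnt s).symm
    exact absurd h (not_le.mpr (samecount y x hyF hxF hcnt' hxy.symm))


-- log(n+1)/n → 0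
lemma log_div_tendsto : Tendsto (fun n : ℕ => Real.log (n + 1) / n) atTop (nhds 0) := by
  have h1 : Tendsto (fun x : ℝ => Real.log x / x) atTop (nhds 0) :=
    Real.isLittleO_log_id_atTop.tendsto_div_nhds_zero
  have h2 : Tendsto (fun n : ℕ => ((n : ℝ) + 1)) atTop atTop :=
    tendsto_atTop_add_const_right _ 1 tendsto_natCast_atTop_atTop
  have h3 : Tendsto (fun n : ℕ => Real.log (n + 1) / (n + 1)) atTop (nhds 0) := h1.comp h2
  have h4 : Tendsto (fun n : ℕ => ((n : ℝ) + 1) / n) atTop (nhds 1) := by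
    have : Tendsto (fun n : ℕ => 1 + 1 / (n : ℝ)) atTop (nhds (1 + 0)) :=
      tendsto_const_nhds.add tendsto_one_div_atTop_nhds_zero_nat
    rw [add_zero] at this
    apply this.congr'
    filter_upwards [eventually_ge_atTop 1] with n hn
    have hn0 : (n : ℝ) ≠ 0 := Nat.cast_ne_zero.mpr (by omega)
    field_simp
  have h5 := h3.mul h4
  rw [zero_mul] at h5
  apply h5.congr'
  filter_upwards [eventually_ge_atTop 1] with n hn
  have hn0 : (n : ℝ) ≠ 0 := Nat.cast_ne_zero.mpr (by omega)
  have hn1 : (n : ℝ) + 1 ≠ 0 := by positivity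
  field_simp

lemma g_tendsto (c : ℕ) :
    Tendsto (fun n : ℕ => (c:ℝ) * ((n:ℝ)+1) ^ (-(c:ℝ)/(n:ℝ))) atTop (nhds c) := by
  have hexp : Tendsto (fun n : ℕ => Real.log ((n:ℝ)+1) * (-(c:ℝ)/(n:ℝ))) atTop (nhds 0) := by
    have h := log_div_tendsto.const_mul (-(c:ℝ))
    rw [mul_zero] at h
    apply h.congr
    intro n
    ring
  have hexp2 : Tendsto (fun n : ℕ => Real.exp (Real.log ((n:ℝ)+1) * (-(c:ℝ)/(n:ℝ))))
      atTop (nhds 1) := by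
    have := (Real.continuous_exp.tendsto 0).comp hexp
    simpa [Function.comp_def] using this
  have := hexp2.const_mul (c:ℝ)
  rw [mul_one] at this
  apply this.congr
  intro n
  congr 1
  rw [Real.rpow_def_of_pos (by positivity)]

lemma capSeq_lower (c n A : ℕ) (hn : 1 ≤ n) (h : c ^ n ≤ (n+1) ^ c * A) :
    (c:ℝ) * ((n:ℝ)+1) ^ (-(c:ℝ)/(n:ℝ)) ≤ (A : ℝ) ^ (1/(n:ℝ)) := by
  have hn0 : (n:ℝ) ≠ 0 := Nat.cast_ne_zero.mpr (by omega)
  have hnp : (0:ℝ) < (n:ℝ)+1 := by positivity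
  have hA : ((c:ℝ)^(n:ℕ) / ((n:ℝ)+1)^(c:ℕ)) ≤ (A:ℝ) := by
    rw [div_le_iff₀ (by positivity)]
    have h2 : ((c:ℝ))^(n:ℕ) ≤ ((n:ℝ)+1)^(c:ℕ) * (A:ℝ) := by
      exact_mod_cast h
    linarith [h2]
  have hmono := Real.rpow_le_rpow (by positivity) hA (by positivity : (0:ℝ) ≤ 1/(n:ℝ))
  calc (c:ℝ) * ((n:ℝ)+1) ^ (-(c:ℝ)/(n:ℝ))
      = ((c:ℝ)^(n:ℕ) / ((n:ℝ)+1)^(c:ℕ)) ^ (1/(n:ℝ)) := by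
        rw [Real.div_rpow (by positivity) (by positivity)]
        rw [← Real.rpow_natCast (c:ℝ) n, ← Real.rpow_natCast ((n:ℝ)+1) c]
        rw [← Real.rpow_mul (by positivity), ← Real.rpow_mul (by positivity)]
        rw [mul_one_div, mul_one_div, div_self hn0, Real.rpow_one]
        rw [neg_div, Real.rpow_neg (by positivity)]
        ring
    _ ≤ (A : ℝ) ^ (1/(n:ℝ)) := hmono

end Aux

/-- If `Y` contains no positive-edges cycle and the least magnitude of a
negative utility value on `Y` exceeds `(|Y|-1)` times the largest nonnegative
utility value on `Y`, then every closed chain of distinct symbols of `Y` has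
negative total weight (so `Y` is feasible for `𝒪(U)`), and `Ξ(U) ≥ |Y|`. -/
theorem capacity_ge_card_of_no_positive_cycle {X : Type*} [Fintype X]
    (U : X → X → ℝ) (hdiag : ∀ i, U i i = 0) (Y : Finset X)
    (hnc : ∀ K : ℕ, ∀ i : Fin (K + 2) → X, (∀ m, i m ∈ Y) →
      Function.Injective i → ∃ m : Fin (K + 2), U (i (m + 1)) (i m) < 0)
    (hmag : ∀ i ∈ Y, ∀ j ∈ Y, U i j < 0 → ∀ i' ∈ Y, ∀ j' ∈ Y, 0 ≤ U i' j' →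
      ((Y.card : ℝ) - 1) * U i' j' < |U i j|) :
    (∀ K : ℕ, ∀ i : Fin (K + 2) → X, (∀ m, i m ∈ Y) → Function.Injective i →
      ∑ m : Fin (K + 2), U (i (m + 1)) (i m) < 0) ∧
    ∀ L : ℝ, Filter.Tendsto (capSeq U) Filter.atTop (nhds L) → (Y.card : ℝ) ≤ L := by
  classical
  have hcyc := part1 U Y hnc hmag
  refine ⟨hcyc, ?_⟩
  intro L hL
  rcases Y.eq_empty_or_nonempty with hYe | hYne
  · have h0 : ((Y.card : ℝ)) = 0 := by rw [hYe]; simp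
    rw [h0]
    exact ge_of_tendsto hL (Eventually.of_forall fun n =>
      Real.rpow_nonneg (Nat.cast_nonneg _) _)
  · have key : ∀ n : ℕ, 1 ≤ n →
        (Y.card:ℝ) * ((n:ℝ)+1) ^ (-(Y.card:ℝ)/(n:ℝ)) ≤ capSeq U n := by
      intro n hn
      have hcb := count_bound U Y hdiag hcyc hYne n
      have := capSeq_lower Y.card n (indepNum (senderGraph U n)) hn hcb
      simpa [capSeq] using this
    exact le_of_tendsto_of_tendsto (g_tendsto Y.card) hL
      (by filter_upwards [eventually_ge_atTop 1] with n hn using key n hn)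
end

section
/- Let 𝒳₁, 𝒳₂ be finite alphabets with utilities 𝒰¹, 𝒰² (zero diagonals), and define 𝒰 on 𝒳 = 𝒳₁ × 𝒳₂ by 𝒰((i₁,i₂),(j₁,j₂)) = (𝒰¹(i₁,j₁) + 𝒰²(i₂,j₂))/2. Then for each n, the Cartesian product of an independent set of the sender graph of 𝒰¹ on 𝒳₁ⁿ with an independent set of the sender graph of 𝒰² on 𝒳₂ⁿ is an independent set of the sender graph of 𝒰 on 𝒳ⁿ. Consequently Ξ(𝒰) ≥ Ξ(𝒰¹) · Ξ(𝒰²). -/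
open Finset Filter Real Topology

lemma comp_le {X : Type*} (W : X → X → ℝ) (hW : ∀ i, W i i = 0) {n : ℕ}
    (S : Set (Fin n → X)) (hS : ∀ x ∈ S, ∀ y ∈ S, ¬ (senderGraph W n).Adj x y)
    {x y : Fin n → X} (hx : x ∈ S) (hy : y ∈ S) :
    ∑ k, W (y k) (x k) ≤ 0 ∧ (x ≠ y → ∑ k, W (y k) (x k) < 0) := by
  by_cases h : x = y
  · subst h
    simp [hW]
  · have hadj := hS x hx y hy
    have : ¬ (0 ≤ ∑ k, W (y k) (x k) ∨ 0 ≤ ∑ k, W (x k) (y k)) := by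
      intro hor
      exact hadj ⟨h, hor⟩
    push_neg at this
    exact ⟨this.1.le, fun _ => this.1⟩

lemma indep_key {X1 X2 : Type*}
    (U1 : X1 → X1 → ℝ) (U2 : X2 → X2 → ℝ)
    (h1 : ∀ i, U1 i i = 0) (h2 : ∀ i, U2 i i = 0)
    (U : X1 × X2 → X1 × X2 → ℝ)
    (hU : ∀ p q : X1 × X2, U p q = (U1 p.1 q.1 + U2 p.2 q.2) / 2)
    (n : ℕ) (S1 : Set (Fin n → X1)) (S2 : Set (Fin n → X2))
    (hS1 : ∀ x ∈ S1, ∀ y ∈ S1, ¬ (senderGraph U1 n).Adj x y)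
    (hS2 : ∀ x ∈ S2, ∀ y ∈ S2, ¬ (senderGraph U2 n).Adj x y)
    (z z' : Fin n → X1 × X2)
    (hz : (fun k => (z k).1) ∈ S1 ∧ (fun k => (z k).2) ∈ S2)
    (hz' : (fun k => (z' k).1) ∈ S1 ∧ (fun k => (z' k).2) ∈ S2) :
    ¬ (senderGraph U n).Adj z z' := by
  rintro ⟨hne, hor⟩
  have hsplit : (fun k => (z k).1) ≠ (fun k => (z' k).1) ∨
      (fun k => (z k).2) ≠ (fun k => (z' k).2) := by
    by_contra h
    push_neg at h
    exact hne (funext fun k => Prod.ext (congrFun h.1 k) (congrFun h.2 k))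
  have hsum : ∀ w w' : Fin n → X1 × X2,
      ∑ k, U (w k) (w' k) =
        (∑ k, U1 (w k).1 (w' k).1 + ∑ k, U2 (w k).2 (w' k).2) / 2 := by
    intro w w'
    simp only [hU]
    rw [← Finset.sum_add_distrib, Finset.sum_div]
  have c1 := comp_le U1 h1 S1 hS1 hz.1 hz'.1
  have c1' := comp_le U1 h1 S1 hS1 hz'.1 hz.1
  have c2 := comp_le U2 h2 S2 hS2 hz.2 hz'.2
  have c2' := comp_le U2 h2 S2 hS2 hz'.2 hz.2
  rcases hor with hle | hle
  · rw [hsum] at hle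
    rcases hsplit with hs | hs
    · have := c1.2 hs
      have := c2.1
      linarith
    · have := c2.2 hs
      have := c1.1
      linarith
  · rw [hsum] at hle
    rcases hsplit with hs | hs
    · have := c1'.2 (Ne.symm hs)
      have := c2'.1
      linarith
    · have := c2'.2 (Ne.symm hs)
      have := c1'.1
      linarith

lemma indepNum_spec {V : Type*} [Fintype V] (G : SimpleGraph V) :
    ∃ s : Finset V, s.card = indepNum G ∧ ∀ x ∈ s, ∀ y ∈ s, ¬ G.Adj x y := by
  have hmem : indepNum G ∈
      {m | ∃ s : Finset V, s.card = m ∧ ∀ x ∈ s, ∀ y ∈ s, ¬ G.Adj x y} := by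
    apply Nat.sSup_mem
    · exact ⟨0, ∅, by simp⟩
    · exact ⟨Fintype.card V, fun m ⟨s, hc, _⟩ => hc ▸ s.card_le_univ⟩
  exact hmem

lemma le_indepNum {V : Type*} [Fintype V] (G : SimpleGraph V) (s : Finset V)
    (hs : ∀ x ∈ s, ∀ y ∈ s, ¬ G.Adj x y) : s.card ≤ indepNum G :=
  le_csSup ⟨Fintype.card V, fun m ⟨t, hc, _⟩ => hc ▸ t.card_le_univ⟩ ⟨s, rfl, hs⟩

/-- For the product alphabet `X₁ × X₂` with utility
`U((i₁,i₂),(j₁,j₂)) = (U₁(i₁,j₁) + U₂(i₂,j₂))/2`, the Cartesian product of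
independent sets of the component sender graphs is independent in the sender
graph of `U`; hence `Ξ(U) ≥ Ξ(U₁) · Ξ(U₂)`. -/
theorem capacity_product_ge {X1 X2 : Type*} [Fintype X1] [Fintype X2]
    (U1 : X1 → X1 → ℝ) (U2 : X2 → X2 → ℝ)
    (h1 : ∀ i, U1 i i = 0) (h2 : ∀ i, U2 i i = 0)
    (U : X1 × X2 → X1 × X2 → ℝ)
    (hU : ∀ p q : X1 × X2, U p q = (U1 p.1 q.1 + U2 p.2 q.2) / 2) :
    (∀ n : ℕ, ∀ S1 : Set (Fin n → X1), ∀ S2 : Set (Fin n → X2),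
      (∀ x ∈ S1, ∀ y ∈ S1, ¬ (senderGraph U1 n).Adj x y) →
      (∀ x ∈ S2, ∀ y ∈ S2, ¬ (senderGraph U2 n).Adj x y) →
      ∀ z z' : Fin n → X1 × X2,
        ((fun k => (z k).1) ∈ S1 ∧ (fun k => (z k).2) ∈ S2) →
        ((fun k => (z' k).1) ∈ S1 ∧ (fun k => (z' k).2) ∈ S2) →
        ¬ (senderGraph U n).Adj z z') ∧
    ∀ L L1 L2 : ℝ,
      Filter.Tendsto (capSeq U) Filter.atTop (nhds L) →
      Filter.Tendsto (capSeq U1) Filter.atTop (nhds L1) →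
      Filter.Tendsto (capSeq U2) Filter.atTop (nhds L2) →
      L1 * L2 ≤ L := by
  refine ⟨fun n S1 S2 hS1 hS2 z z' hz hz' =>
    indep_key U1 U2 h1 h2 U hU n S1 S2 hS1 hS2 z z' hz hz', ?_⟩
  intro L L1 L2 hT hT1 hT2
  have hle : ∀ n, capSeq U1 n * capSeq U2 n ≤ capSeq U n := by
    intro n
    classical
    obtain ⟨s1, hc1, hi1⟩ := indepNum_spec (senderGraph U1 n)
    obtain ⟨s2, hc2, hi2⟩ := indepNum_spec (senderGraph U2 n)
    set f : (Fin n → X1) × (Fin n → X2) → (Fin n → X1 × X2) :=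
      fun p k => (p.1 k, p.2 k) with hf
    have hinj : Function.Injective f := by
      intro p q hpq
      ext k
      · exact congrArg Prod.fst (congrFun hpq k)
      · exact congrArg Prod.snd (congrFun hpq k)
    set s : Finset (Fin n → X1 × X2) := (s1 ×ˢ s2).image f with hsdef
    have hcard : s.card = indepNum (senderGraph U1 n) * indepNum (senderGraph U2 n) := by
      rw [hsdef, Finset.card_image_of_injective _ hinj, Finset.card_product, hc1, hc2]
    have hproj : ∀ w ∈ s, (fun k => (w k).1) ∈ s1 ∧ (fun k => (w k).2) ∈ s2 := by
      intro w hw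
      rw [hsdef] at hw
      obtain ⟨p, hp, rfl⟩ := Finset.mem_image.mp hw
      obtain ⟨hp1, hp2⟩ := Finset.mem_product.mp hp
      exact ⟨hp1, hp2⟩
    have hsind : ∀ x ∈ s, ∀ y ∈ s, ¬ (senderGraph U n).Adj x y := by
      intro x hx y hy
      exact indep_key U1 U2 h1 h2 U hU n (↑s1) (↑s2) hi1 hi2 x y
        (hproj x hx) (hproj y hy)
    have hnum : indepNum (senderGraph U1 n) * indepNum (senderGraph U2 n) ≤
        indepNum (senderGraph U n) := by
      rw [← hcard]
      exact le_indepNum _ s hsind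
    unfold capSeq
    rw [← Real.mul_rpow (by positivity) (by positivity), ← Nat.cast_mul]
    apply Real.rpow_le_rpow (by positivity) _ (by positivity)
    exact_mod_cast hnum
  exact le_of_tendsto_of_tendsto' (hT1.mul hT2) hT hle
end
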